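/- arXiv:1601.02760 — 3 statements merged into one kernel-verified Lean document; each statement's English description precedes it below -/
import Mathlib

section
/- For the wheel graph W_n on n ≥ 4 vertices, M(W_n) = 3, T⁻(W_n) = -1 (interpreting T⁻ over the integers), and T⁺(W_n) = 3. -/
open SimpleGraph

/-- The set `W` induces a path in `G`. -/
def InducesPath {V : Type*} (G : SimpleGraph V) (W : Set V) : Prop :=
  ∃ n : ℕ, Nonempty ((G.induce W) ≃g SimpleGraph.pathGraph n)

/-- The set `U` is covered by `p` vertex-disjoint induced paths of `G`. -/
def IsPathCoverOn {V : Type*} (G : SimpleGraph V) (U : Set V) (p : ℕ) : Prop :=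
  ∃ parts : Fin p → Set V,
    (∀ i, (parts i).Nonempty) ∧
    (Pairwise fun i j => Disjoint (parts i) (parts j)) ∧
    (⋃ i, parts i) = U ∧
    ∀ i, InducesPath G (parts i)

/-- The induced subgraph of `G` on `U` is a vertex-disjoint union of `p` paths. -/
def IsDisjointPathsOn {V : Type*} (G : SimpleGraph V) (U : Set V) (p : ℕ) : Prop :=
  ∃ parts : Fin p → Set V,
    (∀ i, (parts i).Nonempty) ∧
    (Pairwise fun i j => Disjoint (parts i) (parts j)) ∧
    (⋃ i, parts i) = U ∧
    (∀ i, InducesPath G (parts i)) ∧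
    (∀ i j, i ≠ j → ∀ u ∈ parts i, ∀ v ∈ parts j, ¬ G.Adj u v)

/-- The path cover number `P(G)`. -/
noncomputable def pathCoverNumber {V : Type*} (G : SimpleGraph V) : ℕ :=
  sInf {p | IsPathCoverOn G Set.univ p}

/-- `Δ(G)`: max of `p - q` over deletions of `q` vertices leaving `p` disjoint paths. -/
noncomputable def deltaLow {V : Type*} [Fintype V] (G : SimpleGraph V) : ℤ :=
  sSup {d : ℤ | ∃ (S : Finset V) (p : ℕ),
    IsDisjointPathsOn G ((↑S : Set V)ᶜ) p ∧ d = (p : ℤ) - S.card}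

/-- `Δ⁺(G)`: min of `p + q` over deletions of `q` vertices leaving `p` disjoint paths. -/
noncomputable def deltaPlus {V : Type*} [Fintype V] (G : SimpleGraph V) : ℕ :=
  sInf {k | ∃ (S : Finset V) (p : ℕ),
    IsDisjointPathsOn G ((↑S : Set V)ᶜ) p ∧ k = p + S.card}

/-- `T⁻(G)`. -/
noncomputable def Tminus {V : Type*} [Fintype V] (G : SimpleGraph V) : ℤ :=
  sSup {d : ℤ | ∃ S : Finset V, (G.induce ((↑S : Set V)ᶜ)).IsAcyclic ∧
    d = (pathCoverNumber (G.induce ((↑S : Set V)ᶜ)) : ℤ) - S.card}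

/-- `T⁺(G)`. -/
noncomputable def Tplus {V : Type*} [Fintype V] (G : SimpleGraph V) : ℕ :=
  sInf {k | ∃ S : Finset V, (G.induce ((↑S : Set V)ᶜ)).IsAcyclic ∧
    k = pathCoverNumber (G.induce ((↑S : Set V)ᶜ)) + S.card}

/-- `A` is a symmetric real matrix whose graph is `G`, i.e. `A ∈ S(G)`. -/
def MatchesGraph {V : Type*} [Fintype V] (G : SimpleGraph V) (A : Matrix V V ℝ) : Prop :=
  A.IsSymm ∧ ∀ i j : V, i ≠ j → (A i j ≠ 0 ↔ G.Adj i j)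

/-- The nullity of a square real matrix. -/
noncomputable def matNullity {V : Type*} [Fintype V] (A : Matrix V V ℝ) : ℕ :=
  Module.finrank ℝ (LinearMap.ker A.mulVecLin)

/-- `M(G)`: the maximum nullity (= maximum eigenvalue multiplicity). -/
noncomputable def maxNullity {V : Type*} [Fintype V] [DecidableEq V] (G : SimpleGraph V) : ℕ :=
  sSup {k | ∃ A : Matrix V V ℝ, MatchesGraph G A ∧ matNullity A = k}

/-- `mr(G)`: the minimum rank. -/
noncomputable def minRank {V : Type*} [Fintype V] [DecidableEq V] (G : SimpleGraph V) : ℕ :=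
  sInf {k | ∃ A : Matrix V V ℝ, MatchesGraph G A ∧ A.rank = k}

/-- Vertices colored by the zero forcing process started from `B`. -/
inductive ZFClosed {V : Type*} (G : SimpleGraph V) (B : Set V) : V → Prop
  | init (v : V) (h : v ∈ B) : ZFClosed G B v
  | force (u v : V) (hu : ZFClosed G B u) (huv : G.Adj u v)
      (hforce : ∀ w, G.Adj u w → w ≠ v → ZFClosed G B w) : ZFClosed G B v

/-- `B` is a zero forcing set of `G`. -/
def IsZeroForcingSet {V : Type*} (G : SimpleGraph V) (B : Set V) : Prop :=
  ∀ v, ZFClosed G B v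

/-- `Z(G)`: the zero forcing number. -/
noncomputable def zeroForcingNumber {V : Type*} [Fintype V] (G : SimpleGraph V) : ℕ :=
  sInf {k | ∃ B : Finset V, IsZeroForcingSet G ↑B ∧ B.card = k}

/-- The star graph on `Fin n`: vertex `0` adjacent to all others. -/
def starGraph (n : ℕ) : SimpleGraph (Fin n) :=
  SimpleGraph.fromRel (fun i _ => i.val = 0)

/-- The wheel graph: a hub (`none`) joined to every vertex of a cycle on `Fin m`. -/
def wheelGraph (m : ℕ) : SimpleGraph (Option (Fin m)) :=
  SimpleGraph.fromRel (fun u v =>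
    match u, v with
    | none, some _ => True
    | some i, some j => j.val = (i.val + 1) % m
    | _, _ => False)

/-- The `n`-sun: a cycle on `Fin n` (the `inl` vertices) with a pendant vertex
(`inr i`) attached to each cycle vertex (`inl i`). -/
def sunGraph (n : ℕ) : SimpleGraph (Fin n ⊕ Fin n) :=
  SimpleGraph.fromRel (fun u v =>
    match u, v with
    | .inl i, .inl j => j.val = (i.val + 1) % n
    | .inl i, .inr j => i = j
    | _, _ => False)

open scoped Fin.NatCast Fin.CommRing

section Helpers

open SimpleGraph

variable {V : Type*}

lemma inducesPath_of (G : SimpleGraph V) (W : Set V) (k : ℕ) (v : Fin k → V)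
    (hinj : Function.Injective v) (hr : Set.range v = W)
    (hadj : ∀ i j : Fin k, G.Adj (v i) (v j) ↔ ((i : ℕ) + 1 = j ∨ (j : ℕ) + 1 = i)) :
    InducesPath G W := by
  refine ⟨k, ⟨Iso.symm ⟨(Equiv.ofInjective v hinj).trans (Equiv.setCongr hr), ?_⟩⟩⟩
  intro i j
  have hco : ∀ i : Fin k,
      (((Equiv.ofInjective v hinj).trans (Equiv.setCongr hr)) i : V) = v i := by
    intro i; rfl
  show (G.induce W).Adj _ _ ↔ (pathGraph k).Adj i j
  rw [pathGraph_adj]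
  exact hadj i j

lemma inducesPath_singleton (G : SimpleGraph V) (x : V) : InducesPath G {x} := by
  apply inducesPath_of G {x} 1 (fun _ => x)
  · intro a b _; exact Subsingleton.elim a b
  · simp [Set.range_const]
  · intro i j
    constructor
    · intro h; exact absurd rfl h.ne
    · intro h; fin_cases i <;> fin_cases j <;> simp_all

lemma isPathCoverOn_card [Fintype V] (G : SimpleGraph V) :
    IsPathCoverOn G Set.univ (Fintype.card V) := by
  classical
  refine ⟨fun i => {(Fintype.equivFin V).symm i}, fun i => ⟨_, rfl⟩, ?_, ?_, ?_⟩
  · intro i j hij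
    simp only [Set.disjoint_singleton_left, Set.mem_singleton_iff]
    intro h
    exact hij ((Fintype.equivFin V).symm.injective h)
  · ext x
    simp only [Set.mem_iUnion, Set.mem_singleton_iff, Set.mem_univ, iff_true]
    exact ⟨Fintype.equivFin V x, by simp⟩
  · intro i; exact inducesPath_singleton G _

lemma pathCoverNumber_le_card_parts (G : SimpleGraph V) {ι : Type*} [Fintype ι]
    (parts : ι → Set V)
    (hdisj : Pairwise fun i j => Disjoint (parts i) (parts j))
    (hunion : (⋃ i, parts i) = Set.univ)
    (hpath : ∀ i, (parts i).Nonempty → InducesPath G (parts i)) :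
    pathCoverNumber G ≤ Fintype.card ι := by
  classical
  set ι' := {i : ι // (parts i).Nonempty} with hι'
  have e : Fin (Fintype.card ι') ≃ ι' := (Fintype.equivFin ι').symm
  have hcov : IsPathCoverOn G Set.univ (Fintype.card ι') := by
    refine ⟨fun j => parts (e j), fun j => (e j).2, ?_, ?_, fun j => hpath _ (e j).2⟩
    · intro a b hab
      apply hdisj
      intro h
      exact hab (e.injective (Subtype.ext h))
    · apply Set.eq_univ_of_univ_subset
      rw [← hunion]
      intro x hx
      obtain ⟨s, ⟨i, rfl⟩, hxs⟩ := hx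
      have hne : (parts i).Nonempty := ⟨x, hxs⟩
      exact Set.mem_iUnion.2 ⟨e.symm ⟨i, hne⟩, by simpa using hxs⟩
  calc pathCoverNumber G ≤ Fintype.card ι' := Nat.sInf_le hcov
    _ ≤ Fintype.card ι := Fintype.card_subtype_le _

lemma one_le_pathCoverNumber [Fintype V] (G : SimpleGraph V) (hV : Nonempty V) :
    1 ≤ pathCoverNumber G := by
  classical
  have hne : {p | IsPathCoverOn G Set.univ p}.Nonempty := ⟨_, isPathCoverOn_card G⟩
  have hmem := Nat.sInf_mem hne
  rcases Nat.eq_zero_or_pos (sInf {p | IsPathCoverOn G Set.univ p}) with h0 | h1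
  · exfalso
    rw [h0] at hmem
    obtain ⟨parts, _, _, hunion, _⟩ := hmem
    obtain ⟨x⟩ := hV
    have hx : x ∈ (⋃ i : Fin 0, parts i) := hunion ▸ Set.mem_univ x
    simp at hx
  · exact h1

lemma pathCoverNumber_eq_one [Fintype V] (G : SimpleGraph V) (hV : Nonempty V)
    (h : InducesPath G Set.univ) : pathCoverNumber G = 1 := by
  refine le_antisymm ?_ (one_le_pathCoverNumber G hV)
  apply Nat.sInf_le
  exact ⟨fun _ => Set.univ, fun _ => Set.univ_nonempty,
    by intro a b hab; exact absurd (Subsingleton.elim a b) hab,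
    Set.iUnion_const _, fun _ => h⟩

/-- mapping cycles through isos -/
lemma isAcyclic_of_iso {W : Type*} {G : SimpleGraph V} {H : SimpleGraph W}
    (e : G ≃g H) (h : H.IsAcyclic) : G.IsAcyclic := by
  intro v c hc
  exact h (c.map e.toHom) (hc.map (RelIso.injective e))

lemma pathGraph_isAcyclic (n : ℕ) : (pathGraph n).IsAcyclic := by
  rw [isAcyclic_iff_forall_adj_isBridge]
  intro u v huv
  have key : ∀ (a : Fin n) (b : Fin n) (x y : Fin n), (x : ℕ) + 1 = (y : ℕ) →
      ∀ (w : ((pathGraph n) \ fromEdgeSet {s(x, y)}).Walk a b),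
      (a : ℕ) ≤ (x : ℕ) → (b : ℕ) ≤ (x : ℕ) := by
    intro a b x y hxy w
    induction w with
    | nil => intro h; exact h
    | @cons s t u hadj p ih =>
      intro hs
      apply ih
      rw [sdiff_adj, pathGraph_adj] at hadj
      obtain ⟨hst, hne⟩ := hadj
      rcases hst with h1 | h1
      · -- t = s + 1
        rcases Nat.lt_or_ge (t : ℕ) ((x : ℕ) + 1) with h2 | h2
        · omega
        · exfalso
          have hsx : (s : ℕ) = (x : ℕ) := by omega
          have hty : (t : ℕ) = (y : ℕ) := by omega
          have : s = x := Fin.ext hsx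
          have : t = y := Fin.ext hty
          subst this; subst ‹s = x›
          apply hne
          rw [fromEdgeSet_adj]
          exact ⟨rfl, by intro h; rw [h] at h1; omega⟩
      · omega
  rw [pathGraph_adj] at huv
  rcases huv with h | h
  · rw [isBridge_iff]
    rintro ⟨w⟩
    have := key u v u v h w le_rfl
    omega
  · have hs : s(u, v) = s(v, u) := Sym2.eq_swap
    rw [hs, isBridge_iff]
    rintro ⟨w⟩
    have := key v u v u h w le_rfl
    omega

lemma inducesPathUniv_isAcyclic {G : SimpleGraph V} (h : InducesPath G Set.univ) :
    G.IsAcyclic := by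
  obtain ⟨n, ⟨e⟩⟩ := h
  exact isAcyclic_of_iso ((induceUnivIso G).symm.trans e) (pathGraph_isAcyclic n)

end Helpers

section Helpers2

open SimpleGraph

variable {V : Type*}

lemma not_isAcyclic_of_cycle (G : SimpleGraph V) (k : ℕ) [NeZero k] (hk : 3 ≤ k)
    (v : Fin k → V) (hinj : Function.Injective v)
    (hadj : ∀ i : Fin k, G.Adj (v i) (v (i + 1))) : ¬ G.IsAcyclic := by
  have hone : ((1 : Fin k) : ℕ) = 1 := by
    rw [Fin.val_one']; exact Nat.mod_eq_of_lt (by omega)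
  have hvadd : ∀ a : Fin k, ((a + 1 : Fin k) : ℕ) = (a.val + 1) % k := by
    intro a
    rw [Fin.val_add, hone]
  intro h
  rw [isAcyclic_iff_forall_adj_isBridge] at h
  have h01 := h (hadj 0)
  rw [isBridge_iff] at h01
  apply h01
  show (G \ fromEdgeSet {s(v 0, v (0 + 1))}).Reachable (v 0) (v (0 + 1))
  set G' := G \ fromEdgeSet {s(v 0, v (0 + 1))} with hG'
  have hstep : ∀ i : Fin k, i ≠ 0 → G'.Adj (v i) (v (i + 1)) := by
    intro i hi
    rw [hG', sdiff_adj]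
    refine ⟨hadj i, ?_⟩
    rw [fromEdgeSet_adj]
    rintro ⟨hmem, -⟩
    rw [Set.mem_singleton_iff, Sym2.eq_iff] at hmem
    rcases hmem with ⟨h1, -⟩ | ⟨h1, h2⟩
    · exact hi (hinj h1)
    · have hi1 : i = 0 + 1 := hinj h1
      have hi2 : i + 1 = 0 := hinj h2
      have e1 : (i : ℕ) = 1 := by
        rw [hi1, hvadd]
        simp only [Fin.val_zero]
        rw [Nat.mod_eq_of_lt (by omega)]
      have e2 : ((i + 1 : Fin k) : ℕ) = 0 := by rw [hi2]; rfl
      rw [hvadd, e1] at e2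
      rw [Nat.mod_eq_of_lt (by omega)] at e2
      omega
  have reach : ∀ j : ℕ, 1 ≤ j → ∀ h2 : j < k, G'.Reachable (v 1) (v ⟨j, h2⟩) := by
    intro j
    induction j with
    | zero => omega
    | succ j ih =>
      intro _ h2
      rcases Nat.eq_zero_or_pos j with rfl | hj
      · have e : (1 : Fin k) = ⟨0 + 1, h2⟩ := by
          apply Fin.ext; rw [hone]
        rw [← e]
      · have hjk : j < k := by omega
        have hJ : (⟨j, hjk⟩ : Fin k) ≠ 0 := by
          intro hc
          have hc' := congrArg Fin.val hc
          simp at hc'; omega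
        have hA := hstep ⟨j, hjk⟩ hJ
        have e : (⟨j, hjk⟩ : Fin k) + 1 = ⟨j + 1, h2⟩ := by
          apply Fin.ext
          rw [hvadd]
          exact Nat.mod_eq_of_lt h2
        rw [e] at hA
        exact (ih hj hjk).trans hA.reachable
  have hlast : k - 1 < k := by omega
  have r1 := reach (k - 1) (by omega) hlast
  have hJ : (⟨k - 1, hlast⟩ : Fin k) ≠ 0 := by
    intro hc
    have hc' := congrArg Fin.val hc
    simp at hc'; omega
  have hA := hstep ⟨k - 1, hlast⟩ hJ
  have e : (⟨k - 1, hlast⟩ : Fin k) + 1 = 0 := by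
    apply Fin.ext
    rw [hvadd]
    simp only [Fin.val_zero]
    have hh : k - 1 + 1 = k := by omega
    rw [hh, Nat.mod_self]
  rw [e] at hA
  have e0 : (0 : Fin k) + 1 = 1 := zero_add 1
  rw [e0]
  exact (r1.trans hA.reachable).symm

section WheelAdj

variable {m : ℕ}

lemma wheel_adj_none_some (i : Fin m) : (wheelGraph m).Adj none (some i) := by
  rw [wheelGraph, fromRel_adj]
  exact ⟨by simp, Or.inl trivial⟩

lemma wheel_val_add_one [NeZero m] (hm : 2 ≤ m) (i : Fin m) :
    ((i + 1 : Fin m) : ℕ) = (i.val + 1) % m := by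
  rw [Fin.val_add, Fin.val_one']
  conv_rhs => rw [Nat.add_mod]
  rw [Nat.mod_eq_of_lt i.isLt]

lemma wheel_succ_ne [NeZero m] (hm : 2 ≤ m) (i : Fin m) : i + 1 ≠ i := by
  intro hc
  have h1 := congrArg Fin.val hc
  rw [wheel_val_add_one hm] at h1
  have hi := i.isLt
  rcases Nat.lt_or_ge (i.val + 1) m with h | h
  · rw [Nat.mod_eq_of_lt h] at h1; omega
  · have hm2 : i.val + 1 = m := by omega
    rw [hm2, Nat.mod_self] at h1; omega

lemma wheel_adj_some_some [NeZero m] (hm : 3 ≤ m) (i j : Fin m) :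
    (wheelGraph m).Adj (some i) (some j) ↔ (j = i + 1 ∨ i = j + 1) := by
  rw [wheelGraph, fromRel_adj]
  constructor
  · rintro ⟨hne, h | h⟩
    · left
      apply Fin.ext
      rw [wheel_val_add_one (by omega)]
      exact h
    · right
      apply Fin.ext
      rw [wheel_val_add_one (by omega)]
      exact h
  · rintro (rfl | rfl)
    · refine ⟨?_, Or.inl ?_⟩
      · intro hc
        exact wheel_succ_ne (by omega) i (Option.some_injective _ hc).symm
      · show ((i + 1 : Fin m) : ℕ) = (i.val + 1) % m
        exact wheel_val_add_one (by omega) i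
    · refine ⟨?_, Or.inr ?_⟩
      · intro hc
        exact wheel_succ_ne (by omega) j (Option.some_injective _ hc)
      · show ((j + 1 : Fin m) : ℕ) = (j.val + 1) % m
        exact wheel_val_add_one (by omega) j

lemma wheel_not_adj_some [NeZero m] (hm : 3 ≤ m) (i j : Fin m) (h1 : j ≠ i + 1) (h2 : i ≠ j + 1) :
    ¬ (wheelGraph m).Adj (some i) (some j) := by
  rw [wheel_adj_some_some hm]
  rintro (h | h)
  · exact h1 h
  · exact h2 h

end WheelAdj
end Helpers2

section MatrixHelpers

open SimpleGraph Real

/-- The minimizing matrix for the wheel graph. -/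
noncomputable def wheelMat (m : ℕ) : Matrix (Option (Fin m)) (Option (Fin m)) ℝ :=
  fun u v => match u, v with
  | none, none => 2 * m * (1 - Real.cos (2 * Real.pi / m))
  | none, some _ => -2 * (1 - Real.cos (2 * Real.pi / m))
  | some _, none => -2 * (1 - Real.cos (2 * Real.pi / m))
  | some i, some j =>
    if i = j then -2 * Real.cos (2 * Real.pi / m)
    else if (j.val = (i.val + 1) % m ∨ i.val = (j.val + 1) % m) then 1 else 0

lemma no_int_in_open_unit {n : ℤ} {x : ℝ} (h0 : 0 < x) (h1 : x < 1) (h : x = n) : False := by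
  rcases le_or_gt n 0 with h' | h'
  · have : (n : ℝ) ≤ 0 := by exact_mod_cast h'
    linarith
  · have : (1 : ℝ) ≤ (n : ℝ) := by exact_mod_cast h'
    linarith

lemma cos_two_pi_div_ne_one {m : ℕ} (hm : 2 ≤ m) : Real.cos (2 * Real.pi / m) ≠ 1 := by
  intro h
  rw [Real.cos_eq_one_iff] at h
  obtain ⟨n, hn⟩ := h
  have hpi := Real.pi_pos
  have hm' : (0 : ℝ) < m := by positivity
  -- 2π/m = n * 2π, so 1/m = n
  have h1 : (1 : ℝ) / m = n := by
    have h2 : (n : ℝ) * (2 * Real.pi) = 2 * Real.pi / m := hn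
    field_simp at h2 ⊢
    nlinarith [h2]
  exact no_int_in_open_unit (by positivity) (by rw [div_lt_one hm']; exact_mod_cast by omega) h1

lemma sin_two_pi_div_ne_zero {m : ℕ} (hm : 3 ≤ m) : Real.sin (2 * Real.pi / m) ≠ 0 := by
  have hpi := Real.pi_pos
  have hm' : (0 : ℝ) < m := by positivity
  have h3 : (3 : ℝ) ≤ m := by exact_mod_cast hm
  apply ne_of_gt
  apply Real.sin_pos_of_pos_of_lt_pi
  · positivity
  · rw [div_lt_iff₀ hm']
    nlinarith

lemma cos_mod_add {m : ℕ} (hm : 1 ≤ m) (k : ℕ) (t : ℝ) :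
    Real.cos (2 * Real.pi * ((k % m : ℕ) : ℝ) / m + t) = Real.cos (2 * Real.pi * k / m + t) := by
  have hm' : (m : ℝ) ≠ 0 := by positivity
  obtain ⟨q, hq⟩ : ∃ q : ℕ, k / m = q := ⟨_, rfl⟩
  obtain ⟨r, hr⟩ : ∃ r : ℕ, k % m = r := ⟨_, rfl⟩
  have hk : (k : ℝ) = m * q + r := by
    rw [← hq, ← hr]; exact_mod_cast (Nat.div_add_mod k m).symm
  have harg : 2 * Real.pi * k / m + t
      = 2 * Real.pi * (r : ℝ) / m + t + ((q : ℤ) : ℝ) * (2 * Real.pi) := by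
    rw [hk]; push_cast; field_simp; ring
  rw [hr, harg, Real.cos_add_int_mul_two_pi]

lemma sin_mod_add {m : ℕ} (hm : 1 ≤ m) (k : ℕ) (t : ℝ) :
    Real.sin (2 * Real.pi * ((k % m : ℕ) : ℝ) / m + t) = Real.sin (2 * Real.pi * k / m + t) := by
  have hm' : (m : ℝ) ≠ 0 := by positivity
  obtain ⟨q, hq⟩ : ∃ q : ℕ, k / m = q := ⟨_, rfl⟩
  obtain ⟨r, hr⟩ : ∃ r : ℕ, k % m = r := ⟨_, rfl⟩
  have hk : (k : ℝ) = m * q + r := by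
    rw [← hq, ← hr]; exact_mod_cast (Nat.div_add_mod k m).symm
  have harg : 2 * Real.pi * k / m + t
      = 2 * Real.pi * (r : ℝ) / m + t + ((q : ℤ) : ℝ) * (2 * Real.pi) := by
    rw [hk]; push_cast; field_simp; ring
  rw [hr, harg, Real.sin_add_int_mul_two_pi]

lemma sum_exp_eq_zero {m : ℕ} (hm : 2 ≤ m) :
    ∑ j ∈ Finset.range m, Complex.exp (((2 * Real.pi / m : ℝ) : ℂ) * Complex.I) ^ j = 0 := by
  have hpi := Real.pi_pos
  have hm' : (0 : ℝ) < m := by positivity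
  have hζ : Complex.exp (((2 * Real.pi / m : ℝ) : ℂ) * Complex.I) ≠ 1 := by
    intro h1
    rw [Complex.exp_eq_one_iff] at h1
    obtain ⟨n, hn⟩ := h1
    have hI : ((2 * Real.pi / m : ℝ) : ℂ) = (n : ℂ) * (2 * (Real.pi : ℂ)) :=
      mul_right_cancel₀ Complex.I_ne_zero (by linear_combination hn)
    have hR : (2 * Real.pi / m : ℝ) = (n : ℝ) * (2 * Real.pi) := by exact_mod_cast hI
    have hmne : (m : ℝ) ≠ 0 := by positivity
    have hmul : 2 * Real.pi = (n : ℝ) * (2 * Real.pi) * m := by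
      field_simp at hR
      linear_combination (2 * Real.pi) * hR
    have hmul2 : 2 * Real.pi = (2 * Real.pi) * ((n : ℝ) * m) := by
      linear_combination hmul
    rcases le_or_gt n 0 with h' | h'
    · have hn0 : (n : ℝ) ≤ 0 := by exact_mod_cast h'
      have hnm : (n : ℝ) * m ≤ 0 := mul_nonpos_of_nonpos_of_nonneg hn0 hm'.le
      have hfin : (2 * Real.pi) * ((n : ℝ) * m) ≤ 0 :=
        mul_nonpos_of_nonneg_of_nonpos (by positivity) hnm
      linarith [Real.pi_pos]
    · have h1n : (1 : ℝ) ≤ (n : ℝ) := by exact_mod_cast h'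
      have hm2 : (2 : ℝ) ≤ (m : ℝ) := by exact_mod_cast hm
      have hnm : (2 : ℝ) ≤ (n : ℝ) * m := by nlinarith
      have hfin : (2 * Real.pi) * 2 ≤ (2 * Real.pi) * ((n : ℝ) * m) :=
        mul_le_mul_of_nonneg_left hnm (by positivity)
      linarith [Real.pi_pos]
  rw [geom_sum_eq hζ]
  have hpow : Complex.exp (((2 * Real.pi / m : ℝ) : ℂ) * Complex.I) ^ m = 1 := by
    rw [← Complex.exp_nat_mul]
    have : (m : ℂ) * (((2 * Real.pi / m : ℝ) : ℂ) * Complex.I) = 2 * Real.pi * Complex.I := by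
      have hm0 : (m : ℂ) ≠ 0 := by exact_mod_cast (by positivity : (m:ℝ) ≠ 0)
      field_simp
      push_cast
      field_simp
    rw [this]
    exact_mod_cast Complex.exp_two_pi_mul_I
  rw [hpow]
  simp

lemma sum_cos_eq_zero {m : ℕ} (hm : 2 ≤ m) :
    ∑ j ∈ Finset.range m, Real.cos (2 * Real.pi * j / m) = 0 := by
  have h := sum_exp_eq_zero hm
  have hre := congrArg Complex.re h
  rw [Complex.re_sum] at hre
  simp only [Complex.zero_re] at hre
  rw [← hre]
  apply Finset.sum_congr rfl
  intro j _
  rw [← Complex.exp_nat_mul]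
  have : (j : ℂ) * (((2 * Real.pi / m : ℝ) : ℂ) * Complex.I)
      = ((2 * Real.pi * j / m : ℝ) : ℂ) * Complex.I := by
    push_cast
    ring
  rw [this, Complex.exp_ofReal_mul_I_re]

lemma sum_sin_eq_zero {m : ℕ} (hm : 2 ≤ m) :
    ∑ j ∈ Finset.range m, Real.sin (2 * Real.pi * j / m) = 0 := by
  have h := sum_exp_eq_zero hm
  have him := congrArg Complex.im h
  rw [Complex.im_sum] at him
  simp only [Complex.zero_im] at him
  rw [← him]
  apply Finset.sum_congr rfl
  intro j _
  rw [← Complex.exp_nat_mul]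
  have : (j : ℂ) * (((2 * Real.pi / m : ℝ) : ℂ) * Complex.I)
      = ((2 * Real.pi * j / m : ℝ) : ℂ) * Complex.I := by
    push_cast
    ring
  rw [this, Complex.exp_ofReal_mul_I_im]

end MatrixHelpers

section MatrixMain

open SimpleGraph Real Matrix

/-- first kernel vector -/
noncomputable def wx1 (m : ℕ) : Option (Fin m) → ℝ
  | none => 0
  | some i => Real.cos (2 * Real.pi * i.val / m)

/-- second kernel vector -/
noncomputable def wx2 (m : ℕ) : Option (Fin m) → ℝ
  | none => 0
  | some i => Real.sin (2 * Real.pi * i.val / m)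

/-- third kernel vector -/
noncomputable def wx3 (m : ℕ) : Option (Fin m) → ℝ := fun _ => 1

variable {m : ℕ}

lemma fin_add_two_ne [NeZero m] (hm : 3 ≤ m) (i : Fin m) : i + 1 + 1 ≠ i := by
  intro hc
  have h1 := congrArg Fin.val hc
  rw [wheel_val_add_one (by omega), wheel_val_add_one (by omega)] at h1
  have hi := i.isLt
  rcases Nat.lt_or_ge (i.val + 1) m with h | h
  · rw [Nat.mod_eq_of_lt h] at h1
    rcases Nat.lt_or_ge (i.val + 1 + 1) m with h2 | h2
    · rw [Nat.mod_eq_of_lt h2] at h1; omega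
    · have he : i.val + 1 + 1 = m := by omega
      rw [he, Nat.mod_self] at h1; omega
  · have he : i.val + 1 = m := by omega
    rw [he, Nat.mod_self] at h1
    rw [Nat.mod_eq_of_lt (by omega)] at h1
    omega

lemma fin_sub_one_ne [NeZero m] (hm : 3 ≤ m) (i : Fin m) : i - 1 ≠ i := by
  intro hc
  have : i = i + 1 := by
    have := congrArg (· + (1 : Fin m)) hc
    simpa [sub_add_cancel] using this
  exact wheel_succ_ne (by omega) i this.symm

lemma fin_succ_ne_pred [NeZero m] (hm : 3 ≤ m) (i : Fin m) : i + 1 ≠ i - 1 := by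
  intro hc
  have : i + 1 + 1 = i := by rw [hc]; simp [sub_add_cancel]
  exact fin_add_two_ne hm i this

lemma wheelMat_some_some [NeZero m] (hm : 3 ≤ m) (i j : Fin m) :
    wheelMat m (some i) (some j) =
      (if j = i then -2 * Real.cos (2 * Real.pi / m) else 0)
      + ((if j = i + 1 then 1 else 0) + (if j = i - 1 then 1 else 0)) := by
  have hC2 : (j.val = (i.val + 1) % m) ↔ j = i + 1 := by
    rw [Fin.ext_iff, wheel_val_add_one (by omega)]
  have hC3 : (i.val = (j.val + 1) % m) ↔ j = i - 1 := by
    rw [← wheel_val_add_one (by omega : 2 ≤ m) j, ← Fin.ext_iff]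
    constructor
    · intro h; rw [h]; ring
    · intro h; rw [h]; ring
  show (if i = j then -2 * Real.cos (2 * Real.pi / m)
    else if (j.val = (i.val + 1) % m ∨ i.val = (j.val + 1) % m) then 1 else 0) = _
  by_cases h1 : j = i
  · subst h1
    have n1 : j ≠ j + 1 := fun h => wheel_succ_ne (by omega) j h.symm
    have n2 : j ≠ j - 1 := fun h => fin_sub_one_ne hm j h.symm
    rw [if_pos rfl, if_pos rfl, if_neg n1, if_neg n2]
    ring
  · rw [if_neg (Ne.symm h1), if_neg h1]
    by_cases h2 : j = i + 1
    · have n3 : j ≠ i - 1 := by rw [h2]; exact fin_succ_ne_pred hm i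
      rw [if_pos (Or.inl (hC2.mpr h2)), if_pos h2, if_neg n3]
      ring
    · by_cases h3 : j = i - 1
      · rw [if_pos (Or.inr (hC3.mpr h3)), if_neg h2, if_pos h3]
        ring
      · rw [if_neg (by rintro (hc | hc); exacts [h2 (hC2.mp hc), h3 (hC3.mp hc)]),
          if_neg h2, if_neg h3]
        ring

lemma wheelMat_row_some [NeZero m] (hm : 3 ≤ m) (i : Fin m) (f : Fin m → ℝ) :
    ∑ j, wheelMat m (some i) (some j) * f j
      = -2 * Real.cos (2 * Real.pi / m) * f i + f (i + 1) + f (i - 1) := by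
  have hpt : ∀ j : Fin m, wheelMat m (some i) (some j) * f j =
      (if j = i then -2 * Real.cos (2 * Real.pi / m) * f j else 0)
      + ((if j = i + 1 then f j else 0) + (if j = i - 1 then f j else 0)) := by
    intro j
    rw [wheelMat_some_some hm]
    split_ifs <;> ring
  rw [Finset.sum_congr rfl (fun j _ => hpt j)]
  rw [Finset.sum_add_distrib, Finset.sum_add_distrib,
    Finset.sum_ite_eq' Finset.univ i, Finset.sum_ite_eq' Finset.univ (i + 1),
    Finset.sum_ite_eq' Finset.univ (i - 1)]
  simp only [Finset.mem_univ, if_true]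
  ring

lemma wheelMat_mulVec_none [NeZero m] (x : Option (Fin m) → ℝ) :
    (wheelMat m).mulVec x none
      = 2 * m * (1 - Real.cos (2 * Real.pi / m)) * x none
        + ∑ j : Fin m, (-2 * (1 - Real.cos (2 * Real.pi / m))) * x (some j) := by
  show ∑ u, wheelMat m none u * x u = _
  rw [Fintype.sum_option]
  rfl

lemma wheelMat_mulVec_some [NeZero m] (hm : 3 ≤ m) (x : Option (Fin m) → ℝ) (i : Fin m) :
    (wheelMat m).mulVec x (some i)
      = -2 * (1 - Real.cos (2 * Real.pi / m)) * x none
        + (-2 * Real.cos (2 * Real.pi / m) * x (some i) + x (some (i + 1)) + x (some (i - 1))) := by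
  show ∑ u, wheelMat m (some i) u * x u = _
  rw [Fintype.sum_option]
  rw [wheelMat_row_some hm i (fun j => x (some j))]
  rfl

lemma angle_succ [NeZero m] (hm : 3 ≤ m) (i : Fin m) :
    2 * Real.pi * (((i + 1 : Fin m)).val : ℝ) / m
      = 2 * Real.pi * (((i.val + 1) % m : ℕ) : ℝ) / m := by
  rw [wheel_val_add_one (by omega)]

lemma cos_succ [NeZero m] (hm : 3 ≤ m) (i : Fin m) :
    Real.cos (2 * Real.pi * (((i + 1 : Fin m)).val : ℝ) / m)
      = Real.cos (2 * Real.pi * (i.val : ℝ) / m + 2 * Real.pi / m) := by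
  rw [angle_succ hm]
  have h := cos_mod_add (by omega : 1 ≤ m) (i.val + 1) 0
  rw [add_zero, add_zero] at h
  rw [h]
  congr 1
  have hm' : (m : ℝ) ≠ 0 := by positivity
  push_cast
  field_simp

lemma sin_succ [NeZero m] (hm : 3 ≤ m) (i : Fin m) :
    Real.sin (2 * Real.pi * (((i + 1 : Fin m)).val : ℝ) / m)
      = Real.sin (2 * Real.pi * (i.val : ℝ) / m + 2 * Real.pi / m) := by
  rw [angle_succ hm]
  have h := sin_mod_add (by omega : 1 ≤ m) (i.val + 1) 0
  rw [add_zero, add_zero] at h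
  rw [h]
  congr 1
  have hm' : (m : ℝ) ≠ 0 := by positivity
  push_cast
  field_simp

lemma cos_pred [NeZero m] (hm : 3 ≤ m) (i : Fin m) :
    Real.cos (2 * Real.pi * (((i - 1 : Fin m)).val : ℝ) / m)
      = Real.cos (2 * Real.pi * (i.val : ℝ) / m - 2 * Real.pi / m) := by
  have hi : (i - 1) + 1 = i := by ring
  have hval : i.val = (((i - 1 : Fin m)).val + 1) % m := by
    conv_lhs => rw [← hi]
    rw [wheel_val_add_one (by omega)]
  have h := cos_mod_add (by omega : 1 ≤ m) (((i - 1 : Fin m)).val + 1) (-(2 * Real.pi / m))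
  rw [← sub_eq_add_neg, ← sub_eq_add_neg] at h
  have harg : 2 * Real.pi * ((((i - 1 : Fin m)).val + 1 : ℕ) : ℝ) / m - 2 * Real.pi / m
      = 2 * Real.pi * (((i - 1 : Fin m)).val : ℝ) / m := by
    have hm' : (m : ℝ) ≠ 0 := by positivity
    push_cast
    field_simp
    ring
  rw [hval, h, harg]

lemma sin_pred [NeZero m] (hm : 3 ≤ m) (i : Fin m) :
    Real.sin (2 * Real.pi * (((i - 1 : Fin m)).val : ℝ) / m)
      = Real.sin (2 * Real.pi * (i.val : ℝ) / m - 2 * Real.pi / m) := by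
  have hi : (i - 1) + 1 = i := by ring
  have hval : i.val = (((i - 1 : Fin m)).val + 1) % m := by
    conv_lhs => rw [← hi]
    rw [wheel_val_add_one (by omega)]
  have h := sin_mod_add (by omega : 1 ≤ m) (((i - 1 : Fin m)).val + 1) (-(2 * Real.pi / m))
  rw [← sub_eq_add_neg, ← sub_eq_add_neg] at h
  have harg : 2 * Real.pi * ((((i - 1 : Fin m)).val + 1 : ℕ) : ℝ) / m - 2 * Real.pi / m
      = 2 * Real.pi * (((i - 1 : Fin m)).val : ℝ) / m := by
    have hm' : (m : ℝ) ≠ 0 := by positivity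
    push_cast
    field_simp
    ring
  rw [hval, h, harg]

lemma wheelMat_mulVec_wx1 [NeZero m] (hm : 3 ≤ m) :
    (wheelMat m).mulVec (wx1 m) = 0 := by
  funext u
  match u with
  | none =>
    rw [wheelMat_mulVec_none]
    show 2 * m * (1 - Real.cos (2 * Real.pi / m)) * 0
      + ∑ j : Fin m, (-2 * (1 - Real.cos (2 * Real.pi / m)))
          * Real.cos (2 * Real.pi * (j.val : ℝ) / m) = (0 : ℝ)
    rw [← Finset.mul_sum]
    have hs : ∑ j : Fin m, Real.cos (2 * Real.pi * (j.val : ℝ) / m) = 0 := by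
      rw [Fin.sum_univ_eq_sum_range (fun j => Real.cos (2 * Real.pi * (j : ℝ) / m)) m]
      exact sum_cos_eq_zero (by omega)
    rw [hs]
    ring
  | some i =>
    rw [wheelMat_mulVec_some hm]
    show -2 * (1 - Real.cos (2 * Real.pi / m)) * 0
      + (-2 * Real.cos (2 * Real.pi / m) * Real.cos (2 * Real.pi * (i.val : ℝ) / m)
        + Real.cos (2 * Real.pi * (((i + 1 : Fin m)).val : ℝ) / m)
        + Real.cos (2 * Real.pi * (((i - 1 : Fin m)).val : ℝ) / m)) = (0 : ℝ)
    rw [cos_succ hm, cos_pred hm, Real.cos_add, Real.cos_sub]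
    ring

lemma wheelMat_mulVec_wx2 [NeZero m] (hm : 3 ≤ m) :
    (wheelMat m).mulVec (wx2 m) = 0 := by
  funext u
  match u with
  | none =>
    rw [wheelMat_mulVec_none]
    show 2 * m * (1 - Real.cos (2 * Real.pi / m)) * 0
      + ∑ j : Fin m, (-2 * (1 - Real.cos (2 * Real.pi / m)))
          * Real.sin (2 * Real.pi * (j.val : ℝ) / m) = (0 : ℝ)
    rw [← Finset.mul_sum]
    have hs : ∑ j : Fin m, Real.sin (2 * Real.pi * (j.val : ℝ) / m) = 0 := by
      rw [Fin.sum_univ_eq_sum_range (fun j => Real.sin (2 * Real.pi * (j : ℝ) / m)) m]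
      exact sum_sin_eq_zero (by omega)
    rw [hs]
    ring
  | some i =>
    rw [wheelMat_mulVec_some hm]
    show -2 * (1 - Real.cos (2 * Real.pi / m)) * 0
      + (-2 * Real.cos (2 * Real.pi / m) * Real.sin (2 * Real.pi * (i.val : ℝ) / m)
        + Real.sin (2 * Real.pi * (((i + 1 : Fin m)).val : ℝ) / m)
        + Real.sin (2 * Real.pi * (((i - 1 : Fin m)).val : ℝ) / m)) = (0 : ℝ)
    rw [sin_succ hm, sin_pred hm, Real.sin_add, Real.sin_sub]
    ring

lemma wheelMat_mulVec_wx3 [NeZero m] (hm : 3 ≤ m) :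
    (wheelMat m).mulVec (wx3 m) = 0 := by
  funext u
  match u with
  | none =>
    rw [wheelMat_mulVec_none]
    show 2 * m * (1 - Real.cos (2 * Real.pi / m)) * 1
      + ∑ _j : Fin m, (-2 * (1 - Real.cos (2 * Real.pi / m))) * 1 = (0 : ℝ)
    rw [Finset.sum_const, Finset.card_univ, Fintype.card_fin]
    simp only [nsmul_eq_mul]
    ring
  | some i =>
    rw [wheelMat_mulVec_some hm]
    show -2 * (1 - Real.cos (2 * Real.pi / m)) * 1
      + (-2 * Real.cos (2 * Real.pi / m) * 1 + 1 + 1) = (0 : ℝ)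
    ring

lemma matchesGraph_wheelMat [NeZero m] (hm : 3 ≤ m) :
    MatchesGraph (wheelGraph m) (wheelMat m) := by
  have hcosne : Real.cos (2 * Real.pi / m) ≠ 1 := cos_two_pi_div_ne_one (by omega)
  have hval : -2 * (1 - Real.cos (2 * Real.pi / m)) ≠ 0 := by
    intro h
    apply hcosne
    linarith [h]
  constructor
  · show (wheelMat m)ᵀ = wheelMat m
    ext u v
    rw [Matrix.transpose_apply]
    match u, v with
    | none, none => rfl
    | none, some j => rfl
    | some i, none => rfl
    | some i, some j =>
      show (if j = i then -2 * Real.cos (2 * Real.pi / m)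
          else if (i.val = (j.val + 1) % m ∨ j.val = (i.val + 1) % m) then (1:ℝ) else 0)
        = (if i = j then -2 * Real.cos (2 * Real.pi / m)
          else if (j.val = (i.val + 1) % m ∨ i.val = (j.val + 1) % m) then (1:ℝ) else 0)
      by_cases h : i = j
      · rw [if_pos h, if_pos h.symm]
      · rw [if_neg h, if_neg (Ne.symm h)]
        exact if_congr or_comm rfl rfl
  · intro u v huv
    cases u with
    | none =>
      cases v with
      | none => exact absurd rfl huv
      | some j => exact ⟨fun _ => wheel_adj_none_some j, fun _ => hval⟩
    | some i =>
      cases v with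
      | none => exact ⟨fun _ => (wheel_adj_none_some i).symm, fun _ => hval⟩
      | some j =>
        have hne : i ≠ j := fun h => huv (by rw [h])
        have hshow : wheelMat m (some i) (some j)
            = if (j.val = (i.val + 1) % m ∨ i.val = (j.val + 1) % m) then (1:ℝ) else 0 := by
          show (if i = j then -2 * Real.cos (2 * Real.pi / m)
            else if (j.val = (i.val + 1) % m ∨ i.val = (j.val + 1) % m) then (1:ℝ) else 0) = _
          rw [if_neg hne]
        rw [hshow, wheelGraph, SimpleGraph.fromRel_adj]
        by_cases hor : (j.val = (i.val + 1) % m ∨ i.val = (j.val + 1) % m)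
        · rw [if_pos hor]
          constructor
          · intro _; exact ⟨huv, hor⟩
          · intro _; exact one_ne_zero
        · rw [if_neg hor]
          constructor
          · intro h0; exact absurd rfl h0
          · rintro ⟨-, h⟩; exact absurd h hor

lemma rank_submatrix_le_general {α β : Type*} [Fintype α] [Fintype β] [DecidableEq α]
    [DecidableEq β] (A : Matrix β β ℝ) (f g : α → β) :
    (A.submatrix f g).rank ≤ A.rank := by
  have h1 : A * (Matrix.of fun k (j : α) => if g j = k then (1:ℝ) else 0)
      = A.submatrix id g := by
    ext i j
    simp [Matrix.mul_apply, mul_ite, Finset.sum_ite_eq]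
  have h2 : (Matrix.of fun (i : α) k => if k = f i then (1:ℝ) else 0) * (A.submatrix id g)
      = A.submatrix f g := by
    ext i j
    simp [Matrix.mul_apply, ite_mul, Finset.sum_ite_eq']
  calc (A.submatrix f g).rank
      = ((Matrix.of fun (i : α) k => if k = f i then (1:ℝ) else 0) * (A.submatrix id g)).rank := by
        rw [h2]
    _ ≤ (A.submatrix id g).rank := Matrix.rank_mul_le_right _ _
    _ = (A * (Matrix.of fun k (j : α) => if g j = k then (1:ℝ) else 0)).rank := by rw [h1]
    _ ≤ A.rank := Matrix.rank_mul_le_left _ _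

lemma wheel_rank_lower_bound [NeZero m] (hm : 3 ≤ m)
    (A : Matrix (Option (Fin m)) (Option (Fin m)) ℝ)
    (hA : MatchesGraph (wheelGraph m) A) : m - 2 ≤ A.rank := by
  set f : Fin (m - 2) → Option (Fin m) := fun i => some ⟨i.val, by omega⟩ with hf
  set g : Fin (m - 2) → Option (Fin m) := fun j => some ⟨j.val + 1, by omega⟩ with hg
  have hzero : ∀ i j : Fin (m - 2), (i : ℕ) < (j : ℕ) → (A.submatrix f g) i j = 0 := by
    intro i j hij
    have hi2 := i.isLt
    have hj2 := j.isLt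
    have hne : f i ≠ g j := by
      simp only [hf, hg, ne_eq, Option.some.injEq, Fin.ext_iff]
      omega
    by_contra hcon
    have hadj := ((hA.2 _ _ hne).1 hcon)
    rw [wheel_adj_some_some hm] at hadj
    rcases hadj with h | h
    · have hv : j.val + 1 = (i.val + 1) % m := by
        have h2 := congrArg Fin.val h
        rwa [wheel_val_add_one (by omega)] at h2
      rw [Nat.mod_eq_of_lt (by omega)] at hv
      omega
    · have hv : (i.val : ℕ) = (j.val + 1 + 1) % m := by
        have h2 := congrArg Fin.val h
        rwa [wheel_val_add_one (by omega)] at h2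
      rw [Nat.mod_eq_of_lt (by omega)] at hv
      omega
  have hdiag : ∀ i : Fin (m - 2), (A.submatrix f g) i i ≠ 0 := by
    intro i
    have hi2 := i.isLt
    have hne : f i ≠ g i := by
      simp only [hf, hg, ne_eq, Option.some.injEq, Fin.ext_iff]
      omega
    apply (hA.2 _ _ hne).2
    rw [wheel_adj_some_some hm]
    left
    apply Fin.ext
    rw [wheel_val_add_one (by omega)]
    exact (Nat.mod_eq_of_lt (by omega)).symm
  have hdetT : ((A.submatrix f g)ᵀ).det ≠ 0 := by
    rw [Matrix.det_of_upperTriangular (by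
      intro i j hij
      exact hzero j i hij)]
    exact Finset.prod_ne_zero_iff.mpr (fun i _ => hdiag i)
  have hdet : (A.submatrix f g).det ≠ 0 := by
    rwa [Matrix.det_transpose] at hdetT
  have hunit : IsUnit (A.submatrix f g) :=
    (Matrix.isUnit_iff_isUnit_det _).mpr (isUnit_iff_ne_zero.mpr hdet)
  have hrank := Matrix.rank_of_isUnit _ hunit
  rw [Fintype.card_fin] at hrank
  calc m - 2 = (A.submatrix f g).rank := hrank.symm
    _ ≤ A.rank := rank_submatrix_le_general A f g

lemma matNullity_add_rank {W : Type*} [Fintype W] [DecidableEq W] (A : Matrix W W ℝ) :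
    A.rank + matNullity A = Fintype.card W := by
  have h := LinearMap.finrank_range_add_finrank_ker A.mulVecLin
  rw [Module.finrank_pi] at h
  exact h

lemma wheel_nullity_le [NeZero m] (hm : 3 ≤ m)
    (A : Matrix (Option (Fin m)) (Option (Fin m)) ℝ)
    (hA : MatchesGraph (wheelGraph m) A) : matNullity A ≤ 3 := by
  have h1 := matNullity_add_rank A
  rw [Fintype.card_option, Fintype.card_fin] at h1
  have h2 := wheel_rank_lower_bound hm A hA
  omega

lemma wheel_nullity_wheelMat [NeZero m] (hm : 3 ≤ m) : matNullity (wheelMat m) = 3 := by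
  refine le_antisymm (wheel_nullity_le hm _ (matchesGraph_wheelMat hm)) ?_
  classical
  set x : Fin 3 → (Option (Fin m) → ℝ) := ![wx1 m, wx2 m, wx3 m] with hx
  have hker : ∀ t, x t ∈ LinearMap.ker (wheelMat m).mulVecLin := by
    intro t
    rw [LinearMap.mem_ker, Matrix.mulVecLin_apply]
    fin_cases t
    · exact wheelMat_mulVec_wx1 hm
    · exact wheelMat_mulVec_wx2 hm
    · exact wheelMat_mulVec_wx3 hm
  have hv1 : ((1 : Fin m) : ℕ) = 1 := by
    rw [Fin.val_one']
    exact Nat.mod_eq_of_lt (by omega)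
  have hsin : Real.sin (2 * Real.pi * ((1 : Fin m) : ℕ) / m) ≠ 0 := by
    rw [hv1]
    have := sin_two_pi_div_ne_zero hm
    convert this using 2
    push_cast
    ring
  have hli : LinearIndependent ℝ x := by
    rw [Fintype.linearIndependent_iff]
    intro gc hg
    have h0 := congrFun hg none
    have h1 := congrFun hg (some 0)
    have h2 := congrFun hg (some 1)
    simp only [hx, Fin.sum_univ_three, Matrix.cons_val_zero, Matrix.cons_val_one,
      Matrix.head_cons, Pi.add_apply, Pi.smul_apply, smul_eq_mul, Pi.zero_apply,
      Matrix.cons_val_two, Matrix.tail_cons] at h0 h1 h2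
    have e0 : gc 2 = 0 := by
      simpa [wx1, wx2, wx3] using h0
    have e1 : gc 0 = 0 := by
      simp only [wx1, wx2, wx3, Fin.val_zero] at h1
      simp only [Nat.cast_zero, mul_zero, zero_div, Real.cos_zero, Real.sin_zero] at h1
      rw [e0] at h1
      linarith
    have e2 : gc 1 = 0 := by
      simp only [wx1, wx2, wx3] at h2
      rw [e0, e1] at h2
      have h2' : gc 1 * Real.sin (2 * Real.pi * ((1 : Fin m) : ℕ) / m) = 0 := by linarith
      rcases mul_eq_zero.1 h2' with h | h
      · exact h
      · exact absurd h hsin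
    intro t
    fin_cases t
    exacts [e1, e2, e0]
  have hb : LinearIndependent ℝ
      (fun t => (⟨x t, hker t⟩ : LinearMap.ker (wheelMat m).mulVecLin)) := by
    apply LinearIndependent.of_comp (Submodule.subtype _)
    exact hli
  have hcard := hb.fintype_card_le_finrank
  rw [Fintype.card_fin] at hcard
  exact hcard

lemma wheel_maxNullity [NeZero m] (hm : 3 ≤ m) : maxNullity (wheelGraph m) = 3 := by
  have hbound : ∀ k ∈ {k | ∃ A, MatchesGraph (wheelGraph m) A ∧ matNullity A = k}, k ≤ 3 := by
    rintro k ⟨A, hA, rfl⟩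
    exact wheel_nullity_le hm A hA
  have hmem : 3 ∈ {k | ∃ A, MatchesGraph (wheelGraph m) A ∧ matNullity A = k} :=
    ⟨wheelMat m, matchesGraph_wheelMat hm, wheel_nullity_wheelMat hm⟩
  exact le_antisymm (csSup_le ⟨3, hmem⟩ hbound) (le_csSup ⟨3, hbound⟩ hmem)

end MatrixMain

section CoverHelpers

open SimpleGraph

variable {V : Type*} {m : ℕ}

/-- paths from ranges in an induced subgraph -/
lemma inducesPath_range (G : SimpleGraph V) (K : Set V) (k : ℕ) (w : Fin k → V)
    (hmem : ∀ t, w t ∈ K) (hinj : Function.Injective w)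
    (hadj : ∀ a b, G.Adj (w a) (w b) ↔ ((a : ℕ) + 1 = b ∨ (b : ℕ) + 1 = a)) :
    InducesPath (G.induce K) (Set.range (fun t => (⟨w t, hmem t⟩ : K))) := by
  apply inducesPath_of (G.induce K) _ k (fun t => (⟨w t, hmem t⟩ : K))
  · intro a b hab
    exact hinj (congrArg Subtype.val hab)
  · rfl
  · intro a b
    exact hadj a b

lemma fin_cast_eq_iff [NeZero m] {u w : ℕ} (hu : u < m) (hw : w < m) :
    (u : Fin m) = (w : Fin m) ↔ u = w := by
  constructor
  · intro h
    have := congrArg Fin.val h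
    rwa [Fin.val_cast_of_lt hu, Fin.val_cast_of_lt hw] at this
  · intro h; rw [h]

lemma fin_cast_succ_iff [NeZero m] {u w : ℕ} (hu1 : 1 ≤ u) (hu : u < m) (hw : w < m) :
    (u : Fin m) = (w : Fin m) + 1 ↔ u = w + 1 := by
  have hcast : (w : Fin m) + 1 = ((w + 1 : ℕ) : Fin m) := by push_cast; ring
  rw [hcast]
  rcases Nat.lt_or_ge (w + 1) m with h | h
  · exact fin_cast_eq_iff hu h
  · have hwm : w + 1 = m := by omega
    constructor
    · intro hc
      exfalso
      have h2 := congrArg Fin.val hc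
      rw [Fin.val_cast_of_lt hu, hwm, Fin.natCast_self] at h2
      simp at h2
      omega
    · intro hc; omega

end CoverHelpers

section HubCase

open SimpleGraph

variable {m : ℕ}

/-- The key covering bound, case where the hub is deleted. -/
lemma wheel_cover_hub (hm : 3 ≤ m) (S : Finset (Option (Fin m)))
    (hhub : none ∈ S)
    (S' : Finset (Fin m)) (hS' : ∀ i : Fin m, i ∈ S' ↔ some i ∈ S)
    (hS'ne : S'.Nonempty) :
    pathCoverNumber ((wheelGraph m).induce ((↑S : Set (Option (Fin m)))ᶜ)) ≤ S'.card := by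
  classical
  haveI : NeZero m := ⟨by omega⟩
  set K : Set (Option (Fin m)) := (↑S : Set (Option (Fin m)))ᶜ with hK
  have hmemK : ∀ x : Option (Fin m), x ∈ K ↔ x ∉ S := by
    intro x; rw [hK, Set.mem_compl_iff, Finset.mem_coe]
  obtain ⟨s₀, hs₀⟩ := hS'ne
  have hgap_ex : ∀ s : Fin m, s ∈ S' → ∃ d : ℕ, 0 < d ∧ s + (d : Fin m) ∈ S' :=
    fun s hs => ⟨m, by omega, by rw [Fin.natCast_self, add_zero]; exact hs⟩
  set gap : {x // x ∈ S'} → ℕ := fun s => Nat.find (hgap_ex s.1 s.2) with hgapdef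
  have hgap_pos : ∀ s, 0 < gap s := fun s => (Nat.find_spec (hgap_ex s.1 s.2)).1
  have hgap_min : ∀ s (d : ℕ), 0 < d → d < gap s → s.1 + (d : Fin m) ∉ S' := by
    intro s d hd hlt hmem
    exact (Nat.find_min (hgap_ex s.1 s.2) hlt) ⟨hd, hmem⟩
  have hgap_le : ∀ s, gap s ≤ m := by
    intro s
    apply Nat.find_le
    exact ⟨by omega, by rw [Fin.natCast_self, add_zero]; exact s.2⟩
  have hmem_arc : ∀ (s : {x // x ∈ S'}) (t : Fin (gap s - 1)),
      (some (s.1 + ((t.val + 1 : ℕ) : Fin m)) : Option (Fin m)) ∈ K := by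
    intro s t
    rw [hmemK]
    intro hmem
    have ht := t.isLt
    exact hgap_min s (t.val + 1) (by omega) (by omega) ((hS' _).mpr hmem)
  set parts : {x // x ∈ S'} → Set ↥K := fun s =>
    Set.range (fun t : Fin (gap s - 1) => (⟨_, hmem_arc s t⟩ : ↥K)) with hparts
  have claim : ∀ (s₁ s₂ : {x // x ∈ S'}) (r₁ r₂ : ℕ), 1 ≤ r₁ → r₁ < gap s₁ →
      1 ≤ r₂ → r₂ < gap s₂ → r₁ ≤ r₂ → s₁.1 + (r₁ : Fin m) = s₂.1 + (r₂ : Fin m) →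
      s₁ = s₂ := by
    intro s₁ s₂ r₁ r₂ h11 h12 h21 h22 hle heq
    rcases Nat.eq_or_lt_of_le hle with rfl | hlt
    · exact Subtype.ext (add_right_cancel heq)
    · exfalso
      have hd : s₂.1 + ((r₂ - r₁ : ℕ) : Fin m) = s₁.1 := by
        rw [Nat.cast_sub hle]
        linear_combination -heq
      exact hgap_min s₂ (r₂ - r₁) (by omega) (by omega) (hd ▸ s₁.2)
  have hdisj : Pairwise fun s₁ s₂ => Disjoint (parts s₁) (parts s₂) := by
    intro s₁ s₂ hne
    rw [Set.disjoint_left]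
    rintro x ⟨t₁, ht₁⟩ ⟨t₂, ht₂⟩
    have hval : s₁.1 + ((t₁.val + 1 : ℕ) : Fin m) = s₂.1 + ((t₂.val + 1 : ℕ) : Fin m) := by
      have h1 := congrArg Subtype.val ht₁
      have h2 := congrArg Subtype.val ht₂
      rw [← h2] at h1
      exact Option.some_injective _ h1
    have ht1 := t₁.isLt
    have ht2 := t₂.isLt
    rcases le_total (t₁.val + 1) (t₂.val + 1) with h | h
    · exact hne (claim s₁ s₂ _ _ (by omega) (by omega) (by omega) (by omega) h hval)
    · exact hne (claim s₂ s₁ _ _ (by omega) (by omega) (by omega) (by omega) h hval.symm).symm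
  have hunion : (⋃ s, parts s) = Set.univ := by
    apply Set.eq_univ_of_univ_subset
    intro y _
    have hy2 := y.2
    rcases hyv : y.1 with _ | j
    · rw [hyv] at hy2
      exact absurd hhub ((hmemK none).1 hy2)
    · rw [hyv] at hy2
      have hj : j ∉ S' := fun h => ((hmemK (some j)).1 hy2) ((hS' j).1 h)
      have hc_ex : ∃ c : ℕ, 0 < c ∧ j - (c : Fin m) ∈ S' := by
        refine ⟨((j - s₀ : Fin m)).val, ?_, ?_⟩
        · rcases Nat.eq_zero_or_pos ((j - s₀ : Fin m)).val with h0 | h0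
          · exfalso
            have hz : j - s₀ = 0 := Fin.ext (by simpa using h0)
            have hz2 : j = s₀ := by
              have h' := congrArg (· + s₀) hz
              simpa [sub_add_cancel] using h'
            exact hj (hz2 ▸ hs₀)
          · exact h0
        · rw [Fin.cast_val_eq_self]
          have hss : j - (j - s₀) = s₀ := by ring
          rw [hss]
          exact hs₀
      set c := Nat.find hc_ex with hcdef
      have hc_pos : 0 < c := (Nat.find_spec hc_ex).1
      have hc_mem : j - (c : Fin m) ∈ S' := (Nat.find_spec hc_ex).2
      set s : {x // x ∈ S'} := ⟨j - (c : Fin m), hc_mem⟩ with hsdef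
      have hjs : s.1 + (c : Fin m) = j := by rw [hsdef]; ring
      have hc_lt : c < gap s := by
        by_contra hge
        push_neg at hge
        have hmem2 := Nat.find_spec (hgap_ex s.1 s.2)
        rcases Nat.eq_or_lt_of_le hge with heq | hlt
        · apply hj
          have hc2 : s.1 + ((gap s : ℕ) : Fin m) = j := by rw [heq]; exact hjs
          exact hc2 ▸ hmem2.2
        · have hsub : j - ((c - gap s : ℕ) : Fin m) = s.1 + ((gap s : ℕ) : Fin m) := by
            rw [Nat.cast_sub (by omega), ← hjs]
            ring
          have hmem3 : j - ((c - gap s : ℕ) : Fin m) ∈ S' := by rw [hsub]; exact hmem2.2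
          have hgp := hgap_pos s
          exact Nat.find_min hc_ex (show c - gap s < c by omega) ⟨by omega, hmem3⟩
      refine Set.mem_iUnion.2 ⟨s, ?_⟩
      rw [hparts]
      refine ⟨⟨c - 1, by omega⟩, ?_⟩
      apply Subtype.ext
      show some (s.1 + (((c - 1) + 1 : ℕ) : Fin m)) = y.1
      rw [show (c - 1) + 1 = c by omega, hjs, hyv]
  have hpath : ∀ s, (parts s).Nonempty → InducesPath ((wheelGraph m).induce K) (parts s) := by
    intro s _
    rw [hparts]
    have hgl := hgap_le s
    apply inducesPath_range (wheelGraph m) K (gap s - 1)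
      (fun t => some (s.1 + ((t.val + 1 : ℕ) : Fin m)))
    · intro a b hab
      have ha := a.isLt
      have hb := b.isLt
      have h1 := Option.some_injective _ hab
      have h2 := add_left_cancel h1
      apply Fin.ext
      have h3 := (fin_cast_eq_iff (by omega : a.val + 1 < m) (by omega : b.val + 1 < m)).1 h2
      omega
    · intro a b
      have ha := a.isLt
      have hb := b.isLt
      rw [wheel_adj_some_some hm]
      constructor
      · rintro (h | h)
        · left
          rw [add_assoc] at h
          have h2 := add_left_cancel h
          have h3 := (fin_cast_succ_iff (by omega) (by omega) (by omega)).1 h2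
          omega
        · right
          rw [add_assoc] at h
          have h2 := add_left_cancel h
          have h3 := (fin_cast_succ_iff (by omega) (by omega) (by omega)).1 h2
          omega
      · rintro (h | h)
        · left
          rw [add_assoc]
          congr 1
          exact (fin_cast_succ_iff (by omega) (by omega) (by omega)).2 (by omega)
        · right
          rw [add_assoc]
          congr 1
          exact (fin_cast_succ_iff (by omega) (by omega) (by omega)).2 (by omega)
  have hcov := pathCoverNumber_le_card_parts ((wheelGraph m).induce K) parts hdisj hunion hpath
  rw [Fintype.card_coe] at hcov
  exact hcov

end HubCase

section SmallPaths

open SimpleGraph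

variable {V : Type*}

lemma inducesPath_pair (G : SimpleGraph V) (x y : V) (hxy : G.Adj x y) :
    InducesPath G {x, y} := by
  have h1 := hxy.ne
  apply inducesPath_of G _ 2 ![x, y]
  · intro a b hab
    fin_cases a <;> fin_cases b <;> simp_all
  · ext w
    constructor
    · rintro ⟨i, rfl⟩
      fin_cases i <;> simp
    · rintro (rfl | rfl)
      exacts [⟨0, rfl⟩, ⟨1, rfl⟩]
  · intro i j
    fin_cases i <;> fin_cases j <;>
      simp only [Matrix.cons_val_zero, Matrix.cons_val_one, Matrix.head_cons]
    · exact iff_of_false (G.irrefl) (by norm_num)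
    · exact iff_of_true hxy (by norm_num)
    · exact iff_of_true hxy.symm (by norm_num)
    · exact iff_of_false (G.irrefl) (by norm_num)

lemma inducesPath_triple (G : SimpleGraph V) (x y z : V)
    (hxy : G.Adj x y) (hyz : G.Adj y z) (hxz : ¬ G.Adj x z) (hne : x ≠ z) :
    InducesPath G {x, y, z} := by
  have h1 := hxy.ne
  have h2 := hyz.ne
  apply inducesPath_of G _ 3 ![x, y, z]
  · intro a b hab
    fin_cases a <;> fin_cases b <;> simp_all
  · ext w
    constructor
    · rintro ⟨i, rfl⟩
      fin_cases i <;> simp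
    · rintro (rfl | rfl | rfl)
      exacts [⟨0, rfl⟩, ⟨1, rfl⟩, ⟨2, rfl⟩]
  · intro i j
    fin_cases i <;> fin_cases j <;>
      simp only [Matrix.cons_val_zero, Matrix.cons_val_one, Matrix.head_cons,
        Matrix.cons_val_two, Matrix.tail_cons]
    · exact iff_of_false (G.irrefl) (by norm_num)
    · exact iff_of_true hxy (by norm_num)
    · exact iff_of_false hxz (by norm_num)
    · exact iff_of_true hxy.symm (by norm_num)
    · exact iff_of_false (G.irrefl) (by norm_num)
    · exact iff_of_true hyz (by norm_num)
    · exact iff_of_false (fun h => hxz h.symm) (by norm_num)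
    · exact iff_of_true hyz.symm (by norm_num)
    · exact iff_of_false (G.irrefl) (by norm_num)

end SmallPaths

section WheelAcyclicFacts

open SimpleGraph

variable {m : ℕ}

lemma wheel_cycle_not_acyclic (hm : 3 ≤ m) (S : Finset (Option (Fin m)))
    (hall : ∀ i : Fin m, some i ∉ S) :
    ¬ ((wheelGraph m).induce ((↑S : Set (Option (Fin m)))ᶜ)).IsAcyclic := by
  haveI : NeZero m := ⟨by omega⟩
  have hmem : ∀ i : Fin m, (some i : Option (Fin m)) ∈ ((↑S : Set (Option (Fin m)))ᶜ) := by
    intro i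
    rw [Set.mem_compl_iff, Finset.mem_coe]
    exact hall i
  apply not_isAcyclic_of_cycle _ m hm (fun i => ⟨some i, hmem i⟩)
  · intro a b hab
    have := congrArg Subtype.val hab
    exact Option.some_injective _ this
  · intro i
    show (wheelGraph m).Adj (some i) (some (i + 1))
    rw [wheel_adj_some_some hm]
    exact Or.inl rfl

lemma wheel_triangle_not_acyclic (hm : 3 ≤ m) (S : Finset (Option (Fin m)))
    (h0 : none ∉ S) (a b : Fin m) (hab : (wheelGraph m).Adj (some a) (some b))
    (ha : some a ∉ S) (hb : some b ∉ S) :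
    ¬ ((wheelGraph m).induce ((↑S : Set (Option (Fin m)))ᶜ)).IsAcyclic := by
  haveI : NeZero m := ⟨by omega⟩
  have hmem : ∀ x : Option (Fin m), x ∉ S → x ∈ ((↑S : Set (Option (Fin m)))ᶜ) := by
    intro x hx
    rw [Set.mem_compl_iff, Finset.mem_coe]
    exact hx
  have hne : a ≠ b := fun h => hab.ne (by rw [h])
  apply not_isAcyclic_of_cycle _ 3 (by omega)
    ![⟨none, hmem none h0⟩, ⟨some a, hmem _ ha⟩, ⟨some b, hmem _ hb⟩]
  · intro x y hxy
    fin_cases x <;> fin_cases y <;> simp_all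
  · intro i
    fin_cases i
    · show (wheelGraph m).Adj none (some a)
      exact wheel_adj_none_some a
    · show (wheelGraph m).Adj (some a) (some b)
      exact hab
    · show (wheelGraph m).Adj (some b) none
      exact (wheel_adj_none_some b).symm

lemma wheel_two_le_card (hm : 3 ≤ m) (S : Finset (Option (Fin m)))
    (hac : ((wheelGraph m).induce ((↑S : Set (Option (Fin m)))ᶜ)).IsAcyclic) :
    2 ≤ S.card := by
  haveI : NeZero m := ⟨by omega⟩
  by_contra hlt
  push_neg at hlt
  interval_cases hc : S.card
  · rw [Finset.card_eq_zero] at hc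
    subst hc
    exact wheel_cycle_not_acyclic hm _ (fun i => Finset.notMem_empty _) hac
  · rw [Finset.card_eq_one] at hc
    obtain ⟨x, rfl⟩ := hc
    match x with
    | none =>
      exact wheel_cycle_not_acyclic hm _ (fun i => by simp) hac
    | some t =>
      apply wheel_triangle_not_acyclic hm _ (by simp) (t + 1) (t + 1 + 1)
        (by rw [wheel_adj_some_some hm]; exact Or.inl rfl)
        (by simp only [Finset.mem_singleton, Option.some.injEq]
            exact fun h => wheel_succ_ne (by omega) t h)
        (by simp only [Finset.mem_singleton, Option.some.injEq]
            exact fun h => fin_add_two_ne hm t h)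
        hac

end WheelAcyclicFacts

section FinalAssembly

open SimpleGraph

variable {m : ℕ}

lemma wheel_S0 [NeZero m] (hm : 3 ≤ m) :
    ((wheelGraph m).induce
        ((↑({none, some (0:Fin m)} : Finset (Option (Fin m))) : Set (Option (Fin m)))ᶜ)).IsAcyclic ∧
    pathCoverNumber ((wheelGraph m).induce
        ((↑({none, some (0:Fin m)} : Finset (Option (Fin m))) : Set (Option (Fin m)))ᶜ)) = 1 ∧
    ({none, some (0:Fin m)} : Finset (Option (Fin m))).card = 2 := by
  set S₀ : Finset (Option (Fin m)) := {none, some (0:Fin m)} with hS₀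
  set K : Set (Option (Fin m)) := (↑S₀ : Set (Option (Fin m)))ᶜ with hK
  have hmemK : ∀ x : Option (Fin m), x ∈ K ↔ (x ≠ none ∧ x ≠ some 0) := by
    intro x
    rw [hK, Set.mem_compl_iff, Finset.mem_coe, hS₀]
    simp [not_or]
  have hmem : ∀ t : Fin (m - 1), (some (((t.val + 1 : ℕ)) : Fin m) : Option (Fin m)) ∈ K := by
    intro t
    have ht := t.isLt
    rw [hmemK]
    refine ⟨by simp, ?_⟩
    intro hc
    have h1 := Option.some_injective _ hc
    have hv := congrArg Fin.val h1
    rw [Fin.val_cast_of_lt (by omega : t.val + 1 < m)] at hv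
    simp at hv
  have hpath : InducesPath ((wheelGraph m).induce K) Set.univ := by
    apply inducesPath_of _ _ (m - 1) (fun t => (⟨_, hmem t⟩ : K))
    · intro a b hab
      have h1 := congrArg Subtype.val hab
      have h2 := Option.some_injective _ h1
      have ha := a.isLt; have hb := b.isLt
      have h3 := (fin_cast_eq_iff (by omega) (by omega)).1 h2
      exact Fin.ext (by omega)
    · apply Set.eq_univ_of_univ_subset
      intro y _
      have hy := (hmemK y.1).1 y.2
      rcases hyv : y.1 with _ | j
      · exact absurd hyv hy.1

      · have hj0 : j ≠ 0 := by
          intro hc; apply hy.2; rw [hyv, hc]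
        have hjval : 1 ≤ j.val := by
          by_contra hc; push_neg at hc
          exact hj0 (Fin.ext (by rw [Fin.val_zero]; omega))
        refine ⟨⟨j.val - 1, by have := j.isLt; omega⟩, ?_⟩
        apply Subtype.ext
        show some (((j.val - 1 + 1 : ℕ)) : Fin m) = y.1
        rw [show j.val - 1 + 1 = j.val by omega, Fin.cast_val_eq_self, hyv]
    · intro a b
      have ha := a.isLt; have hb := b.isLt
      show (wheelGraph m).Adj (some (((a.val + 1 : ℕ)) : Fin m))
        (some (((b.val + 1 : ℕ)) : Fin m)) ↔ _
      rw [wheel_adj_some_some hm]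
      constructor
      · rintro (h | h)
        · left
          have := (fin_cast_succ_iff (by omega) (by omega) (by omega)).1 h
          omega
        · right
          have := (fin_cast_succ_iff (by omega) (by omega) (by omega)).1 h
          omega
      · rintro (h | h)
        · exact Or.inl ((fin_cast_succ_iff (by omega) (by omega) (by omega)).2 (by omega))
        · exact Or.inr ((fin_cast_succ_iff (by omega) (by omega) (by omega)).2 (by omega))
  have hne : Nonempty ↥K := ⟨⟨_, hmem ⟨0, by omega⟩⟩⟩
  refine ⟨inducesPathUniv_isAcyclic hpath, pathCoverNumber_eq_one _ hne hpath, ?_⟩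
  rw [hS₀]
  rw [Finset.card_insert_of_notMem (by simp), Finset.card_singleton]

lemma wheel_cover_nonhub (hm : 3 ≤ m) (S : Finset (Option (Fin m)))
    (hhub : none ∉ S)
    (hac : ((wheelGraph m).induce ((↑S : Set (Option (Fin m)))ᶜ)).IsAcyclic) :
    pathCoverNumber ((wheelGraph m).induce ((↑S : Set (Option (Fin m)))ᶜ)) + 1 ≤ S.card := by
  classical
  haveI : NeZero m := ⟨by omega⟩
  set K : Set (Option (Fin m)) := (↑S : Set (Option (Fin m)))ᶜ with hK
  have hmemK : ∀ x : Option (Fin m), x ∈ K ↔ x ∉ S := fun x => by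
    rw [hK, Set.mem_compl_iff, Finset.mem_coe]
  set T : Finset (Fin m) := Finset.univ.filter (fun i => ¬ (some i ∈ S)) with hT
  set S' : Finset (Fin m) := Finset.univ.filter (fun i => some i ∈ S) with hS'
  have hTmem : ∀ i : Fin m, i ∈ T ↔ some i ∉ S := by intro i; simp [hT]
  have hS'mem : ∀ i : Fin m, i ∈ S' ↔ some i ∈ S := by intro i; simp [hS']
  have hcardS : S.card = S'.card := by
    have himg : S = S'.image some := by
      ext x
      cases x with
      | none => simp [hhub]
      | some j => simp [hS'mem]
    rw [himg, Finset.card_image_of_injective _ (Option.some_injective _)]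
  have hcards : S'.card + T.card = m := by
    have h := Finset.card_filter_add_card_filter_not
      (s := (Finset.univ : Finset (Fin m))) (p := fun i => some i ∈ S)
    rw [Finset.card_univ, Fintype.card_fin] at h
    exact h
  have hind : ∀ a b : Fin m, a ∈ T → b ∈ T → ¬ (wheelGraph m).Adj (some a) (some b) := by
    intro a b haT hbT hadj
    exact wheel_triangle_not_acyclic hm S hhub a b hadj ((hTmem a).1 haT) ((hTmem b).1 hbT) hac
  have hTS : T.card ≤ S'.card := by
    apply Finset.card_le_card_of_injOn (fun i => i + 1)
    · intro i hi
      rw [Finset.mem_coe, hS'mem]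
      by_contra hnot
      exact hind i (i+1) hi ((hTmem _).2 hnot)
        (by rw [wheel_adj_some_some hm]; exact Or.inl rfl)
    · intro a _ b _ hab
      exact add_right_cancel hab
  have hhubK : (none : Option (Fin m)) ∈ K := (hmemK none).2 hhub
  have heltT : ∀ j : Fin m, j ∈ T → (some j : Option (Fin m)) ∈ K :=
    fun j hj => (hmemK _).2 ((hTmem j).1 hj)
  rcases Nat.lt_or_ge T.card 2 with hT2 | hT2
  · have hP : pathCoverNumber ((wheelGraph m).induce K) = 1 := by
      rcases Nat.lt_or_ge T.card 1 with hT0 | hT1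
      · have hTe : T = ∅ := Finset.card_eq_zero.1 (by omega)
        have huniv : (Set.univ : Set ↥K) = {⟨none, hhubK⟩} := by
          ext y
          obtain ⟨yv, hyK⟩ := y
          simp only [Set.mem_univ, true_iff, Set.mem_singleton_iff]
          cases yv with
          | none => exact Subtype.ext rfl
          | some j =>
            exfalso
            have hjT : j ∈ T := (hTmem j).2 ((hmemK _).1 hyK)
            rw [hTe] at hjT
            simp at hjT
        apply pathCoverNumber_eq_one ((wheelGraph m).induce K) ⟨⟨none, hhubK⟩⟩
        rw [huniv]
        exact inducesPath_singleton _ _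
      · obtain ⟨t, hTt⟩ := Finset.card_eq_one.1 (show T.card = 1 by omega)
        have htT : t ∈ T := by rw [hTt]; simp
        have huniv : (Set.univ : Set ↥K) = {⟨none, hhubK⟩, ⟨some t, heltT t htT⟩} := by
          ext y
          obtain ⟨yv, hyK⟩ := y
          simp only [Set.mem_univ, true_iff, Set.mem_insert_iff, Set.mem_singleton_iff]
          cases yv with
          | none => left; exact Subtype.ext rfl
          | some j =>
            right
            have hjT : j ∈ T := (hTmem j).2 ((hmemK _).1 hyK)
            rw [hTt] at hjT
            simp at hjT
            exact Subtype.ext (by show (some j : Option (Fin m)) = some t; rw [hjT])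
        apply pathCoverNumber_eq_one ((wheelGraph m).induce K) ⟨⟨none, hhubK⟩⟩
        rw [huniv]
        exact inducesPath_pair _ _ _ (wheel_adj_none_some t)
    omega
  · obtain ⟨t₀, ht₀, t₁, ht₁, hne01⟩ := Finset.one_lt_card.1 (show 1 < T.card by omega)
    have ht₁e : t₁ ∈ T.erase t₀ := Finset.mem_erase.2 ⟨Ne.symm hne01, ht₁⟩
    set parts : {x // x ∈ T.erase t₀} → Set ↥K := fun x =>
      if x.1 = t₁ then
        ({⟨some t₀, heltT t₀ ht₀⟩, ⟨none, hhubK⟩, ⟨some t₁, heltT t₁ ht₁⟩} : Set ↥K)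
      else {⟨some x.1, heltT x.1 (Finset.mem_of_mem_erase x.2)⟩} with hparts
    have hdisj : Pairwise fun x₁ x₂ => Disjoint (parts x₁) (parts x₂) := by
      intro x₁ x₂ hne12
      have hvne : x₁.1 ≠ x₂.1 := fun h => hne12 (Subtype.ext h)
      have hsub : ∀ (x y : {x // x ∈ T.erase t₀}), x.1 ≠ t₁ → y.1 = t₁ →
          Disjoint (parts x) (parts y) := by
        intro x y hx hyq
        have hpx : parts x = {⟨some x.1, heltT x.1 (Finset.mem_of_mem_erase x.2)⟩} := by
          rw [hparts]; exact if_neg hx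
        have hpy : parts y
            = ({⟨some t₀, heltT t₀ ht₀⟩, ⟨none, hhubK⟩, ⟨some t₁, heltT t₁ ht₁⟩} : Set ↥K) := by
          rw [hparts]; exact if_pos hyq
        rw [hpx, hpy, Set.disjoint_left]
        rintro z hz1 hz2
        rw [Set.mem_singleton_iff] at hz1
        subst hz1
        simp only [Set.mem_insert_iff, Set.mem_singleton_iff] at hz2
        rcases hz2 with h | h | h
        · exact (Finset.ne_of_mem_erase x.2)
            (Option.some_injective _ (congrArg Subtype.val h))
        · exact absurd (congrArg Subtype.val h) (by simp)
        · exact hx (Option.some_injective _ (congrArg Subtype.val h))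
      by_cases h1 : x₁.1 = t₁
      · by_cases h2 : x₂.1 = t₁
        · exact absurd (h1.trans h2.symm) hvne
        · exact (hsub x₂ x₁ h2 h1).symm
      · by_cases h2 : x₂.1 = t₁
        · exact hsub x₁ x₂ h1 h2
        · have hpx : parts x₁ = {⟨some x₁.1, heltT x₁.1 (Finset.mem_of_mem_erase x₁.2)⟩} := by
            rw [hparts]; exact if_neg h1
          have hpy : parts x₂ = {⟨some x₂.1, heltT x₂.1 (Finset.mem_of_mem_erase x₂.2)⟩} := by
            rw [hparts]; exact if_neg h2
          rw [hpx, hpy, Set.disjoint_singleton_left, Set.mem_singleton_iff]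
          intro h
          exact hvne (Option.some_injective _ (congrArg Subtype.val h))
    have hunion : (⋃ x, parts x) = Set.univ := by
      apply Set.eq_univ_of_univ_subset
      intro y _
      have hp1 : parts ⟨t₁, ht₁e⟩
          = ({⟨some t₀, heltT t₀ ht₀⟩, ⟨none, hhubK⟩, ⟨some t₁, heltT t₁ ht₁⟩} : Set ↥K) := by
        rw [hparts]; exact if_pos rfl
      obtain ⟨yv, hyK⟩ := y
      cases yv with
      | none =>
        refine Set.mem_iUnion.2 ⟨⟨t₁, ht₁e⟩, ?_⟩
        rw [hp1]
        right; left
        exact Subtype.ext rfl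
      | some j =>
        have hjT : j ∈ T := (hTmem j).2 ((hmemK _).1 hyK)
        by_cases hj0 : j = t₀
        · refine Set.mem_iUnion.2 ⟨⟨t₁, ht₁e⟩, ?_⟩
          subst hj0
          rw [hp1]
          left
          exact Subtype.ext rfl
        · refine Set.mem_iUnion.2 ⟨⟨j, Finset.mem_erase.2 ⟨hj0, hjT⟩⟩, ?_⟩
          by_cases hj1 : j = t₁
          · have hp2 : parts ⟨j, Finset.mem_erase.2 ⟨hj0, hjT⟩⟩
                = ({⟨some t₀, heltT t₀ ht₀⟩, ⟨none, hhubK⟩,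
                    ⟨some t₁, heltT t₁ ht₁⟩} : Set ↥K) := by
              rw [hparts]; exact if_pos hj1
            rw [hp2]
            right; right
            exact Subtype.ext (by show (some j : Option (Fin m)) = some t₁; rw [hj1])
          · have hp2 : parts ⟨j, Finset.mem_erase.2 ⟨hj0, hjT⟩⟩
                = {⟨some j, heltT j hjT⟩} := by
              rw [hparts]; exact if_neg hj1
            rw [hp2]
            exact Set.mem_singleton_iff.2 (Subtype.ext rfl)
    have hpathp : ∀ x, (parts x).Nonempty → InducesPath ((wheelGraph m).induce K) (parts x) := by
      intro x _
      by_cases h1 : x.1 = t₁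
      · have hp : parts x
            = ({⟨some t₀, heltT t₀ ht₀⟩, ⟨none, hhubK⟩, ⟨some t₁, heltT t₁ ht₁⟩} : Set ↥K) := by
          rw [hparts]; exact if_pos h1
        rw [hp]
        apply inducesPath_triple
        · show (wheelGraph m).Adj (some t₀) none
          exact (wheel_adj_none_some t₀).symm
        · show (wheelGraph m).Adj none (some t₁)
          exact wheel_adj_none_some t₁
        · show ¬ (wheelGraph m).Adj (some t₀) (some t₁)
          exact hind t₀ t₁ ht₀ ht₁
        · intro h
          exact hne01 (Option.some_injective _ (congrArg Subtype.val h))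
      · have hp : parts x = {⟨some x.1, heltT x.1 (Finset.mem_of_mem_erase x.2)⟩} := by
          rw [hparts]; exact if_neg h1
        rw [hp]
        exact inducesPath_singleton _ _
    have hcov := pathCoverNumber_le_card_parts ((wheelGraph m).induce K) parts hdisj hunion hpathp
    rw [Fintype.card_coe, Finset.card_erase_of_mem ht₀] at hcov
    omega

lemma wheel_main_bound (hm : 3 ≤ m) (S : Finset (Option (Fin m)))
    (hac : ((wheelGraph m).induce ((↑S : Set (Option (Fin m)))ᶜ)).IsAcyclic) :
    pathCoverNumber ((wheelGraph m).induce ((↑S : Set (Option (Fin m)))ᶜ)) + 1 ≤ S.card := by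
  classical
  by_cases hhub : none ∈ S
  · set S' : Finset (Fin m) := Finset.univ.filter (fun i => some i ∈ S) with hS'
    have hS'mem : ∀ i : Fin m, i ∈ S' ↔ some i ∈ S := by intro i; simp [hS']
    have hS'ne : S'.Nonempty := by
      rw [Finset.nonempty_iff_ne_empty]
      intro he
      refine wheel_cycle_not_acyclic hm S ?_ hac
      intro i hi
      have h2 : i ∈ S' := (hS'mem i).2 hi
      rw [he] at h2
      exact absurd h2 (Finset.notMem_empty i)
    have hcard : S.card = S'.card + 1 := by
      have himg : S = insert none (S'.image some) := by
        ext x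
        cases x with
        | none => simp [hhub]
        | some j => simp [hS'mem]
      rw [himg, Finset.card_insert_of_notMem (by simp),
        Finset.card_image_of_injective _ (Option.some_injective _)]
    have hle := wheel_cover_hub hm S hhub S' hS'mem hS'ne
    omega
  · exact wheel_cover_nonhub hm S hhub hac

lemma wheel_Tminus (hm : 3 ≤ m) : Tminus (wheelGraph m) = -1 := by
  classical
  haveI : NeZero m := ⟨by omega⟩
  obtain ⟨hac0, hP0, hc0⟩ := wheel_S0 hm
  unfold Tminus
  apply le_antisymm
  · apply csSup_le
    · exact ⟨-1, ⟨{none, some (0:Fin m)}, hac0, by rw [hP0, hc0]; norm_num⟩⟩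
    · rintro d ⟨S, hac, rfl⟩
      have hb := wheel_main_bound hm S hac
      have hb' : (pathCoverNumber ((wheelGraph m).induce ((↑S : Set (Option (Fin m)))ᶜ)) : ℤ) + 1
          ≤ (S.card : ℤ) := by exact_mod_cast hb
      omega
  · apply le_csSup
    · refine ⟨-1, ?_⟩
      rintro d ⟨S, hac, rfl⟩
      have hb := wheel_main_bound hm S hac
      have hb' : (pathCoverNumber ((wheelGraph m).induce ((↑S : Set (Option (Fin m)))ᶜ)) : ℤ) + 1
          ≤ (S.card : ℤ) := by exact_mod_cast hb
      omega
    · exact ⟨{none, some (0:Fin m)}, hac0, by rw [hP0, hc0]; norm_num⟩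

lemma wheel_Tplus (hm : 3 ≤ m) : Tplus (wheelGraph m) = 3 := by
  classical
  haveI : NeZero m := ⟨by omega⟩
  obtain ⟨hac0, hP0, hc0⟩ := wheel_S0 hm
  unfold Tplus
  apply le_antisymm
  · apply Nat.sInf_le
    exact ⟨{none, some (0:Fin m)}, hac0, by rw [hP0, hc0]⟩
  · apply le_csInf
    · exact ⟨3, ⟨{none, some (0:Fin m)}, hac0, by rw [hP0, hc0]⟩⟩
    · rintro k ⟨S, hac, rfl⟩
      have h2 := wheel_two_le_card hm S hac
      rcases Nat.lt_or_ge S.card 3 with h3 | h3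
      · have hex : ∃ x : Option (Fin m), x ∉ S := by
          by_contra hno
          push_neg at hno
          have hsub : (Finset.univ : Finset (Option (Fin m))) ⊆ S := fun x _ => hno x
          have hcard := Finset.card_le_card hsub
          rw [Finset.card_univ, Fintype.card_option, Fintype.card_fin] at hcard
          omega
        obtain ⟨x, hx⟩ := hex
        have hne : Nonempty (((↑S : Set (Option (Fin m)))ᶜ : Set (Option (Fin m)))) :=
          ⟨⟨x, by rw [Set.mem_compl_iff, Finset.mem_coe]; exact hx⟩⟩
        have hP := one_le_pathCoverNumber ((wheelGraph m).induce ((↑S : Set (Option (Fin m)))ᶜ)) hne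
        omega
      · omega

end FinalAssembly

theorem wheel_maxNullity_Tminus_Tplus (n : ℕ) (hn : 4 ≤ n) :
    maxNullity (wheelGraph (n - 1)) = 3 ∧
      Tminus (wheelGraph (n - 1)) = -1 ∧
      Tplus (wheelGraph (n - 1)) = 3 := by
  have hm : 3 ≤ n - 1 := by omega
  haveI : NeZero (n - 1) := ⟨by omega⟩
  exact ⟨wheel_maxNullity hm, wheel_Tminus hm, wheel_Tplus hm⟩
end

section
/- Let G be a connected graph with n vertices and m edges, and let S be a vertex set such that G∖S is acyclic. Then there exists S' ⊆ S with |S'| ≤ m - n + 1 such that G∖S' is acyclic. -/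
open SimpleGraph

namespace ESAD


variable {V : Type*} {G : SimpleGraph V}

/-- Hom from an induced subgraph into the ambient graph. -/
def inducedHom (G : SimpleGraph V) (W : Set V) : G.induce W →g G :=
  ⟨Subtype.val, fun h => h⟩

lemma inducedHom_injective (W : Set V) :
    Function.Injective (inducedHom G W) := Subtype.val_injective

/-- Lift a walk whose support lies in `W` to the induced graph. -/
def liftWalk {W : Set V} : ∀ {a b : V} (p : G.Walk a b)
    (hp : ∀ x ∈ p.support, x ∈ W),
    (G.induce W).Walk ⟨a, hp a p.start_mem_support⟩ ⟨b, hp b p.end_mem_support⟩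
  | _, _, Walk.nil, _ => Walk.nil
  | _, _, Walk.cons h p, hp =>
      Walk.cons (by exact h)
        (liftWalk p (fun x hx => hp x (by simp [Walk.support_cons, hx])))

lemma liftWalk_map {W : Set V} : ∀ {a b : V} (p : G.Walk a b)
    (hp : ∀ x ∈ p.support, x ∈ W),
    (liftWalk p hp).map (inducedHom G W) = p
  | _, _, Walk.nil, _ => rfl
  | _, _, Walk.cons h p, hp => by
      simp only [liftWalk, Walk.map_cons]
      congr 1
      exact congrArg (Walk.cons h) (liftWalk_map p _)

/-- A cycle in `G` avoiding the complement of `W` yields a cycle in `G.induce W`,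
so if the induced graph is acyclic, every cycle meets `Wᶜ`. -/
lemma exists_mem_compl_of_isCycle {W : Set V}
    (hW : (G.induce W).IsAcyclic) {u : V} {c : G.Walk u u} (hc : c.IsCycle) :
    ∃ x ∈ c.support, x ∉ W := by
  by_contra h
  push_neg at h
  have hc' : (liftWalk c h).IsCycle := by
    rw [← Walk.map_isCycle_iff_of_injective (inducedHom_injective W)]
    rw [liftWalk_map]
    exact hc
  exact hW _ hc'

/-- Acyclicity transfers down across graph inequalities and set inclusions. -/
lemma isAcyclic_induce_mono {H : SimpleGraph V} {A B : Set V} (hAB : A ⊆ B)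
    (hadj : ∀ a b : V, a ∈ A → b ∈ A → G.Adj a b → H.Adj a b)
    (h : (H.induce B).IsAcyclic) : (G.induce A).IsAcyclic := by
  intro v c hc
  let f : G.induce A →g H.induce B :=
    ⟨Set.inclusion hAB, fun {x y} hxy => by exact hadj _ _ x.2 y.2 hxy⟩
  have hf : Function.Injective f := Set.inclusion_injective hAB
  exact h (c.map f) (hc.map hf)

lemma isAcyclic_induce_of_isAcyclic (h : G.IsAcyclic) (W : Set V) :
    (G.induce W).IsAcyclic := by
  intro v c hc
  exact h (c.map (inducedHom G W)) (hc.map (inducedHom_injective W))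

lemma preconnected_delete_edge (hG : G.Preconnected) {v w : V}
    (hr : (G \ fromEdgeSet {s(v, w)}).Reachable v w) :
    (G \ fromEdgeSet {s(v, w)}).Preconnected := by
  have step : ∀ {a c : V}, G.Adj a c → (G \ fromEdgeSet {s(v, w)}).Reachable a c := by
    intro a c hac
    by_cases he : s(a, c) = s(v, w)
    · rw [Sym2.eq_iff] at he
      rcases he with ⟨rfl, rfl⟩ | ⟨rfl, rfl⟩
      · exact hr
      · exact hr.symm
    · exact Adj.reachable (by rw [sdiff_adj]; exact ⟨hac, by simp [fromEdgeSet_adj, he]⟩)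
  intro a b
  obtain ⟨p⟩ := hG a b
  induction p with
  | nil => rfl
  | cons h q ih => exact (step h).trans ih


theorem aux : ∀ (k : ℕ) {V : Type*} [Fintype V] [DecidableEq V]
    (G : SimpleGraph V), G.edgeSet.ncard ≤ k → G.Connected →
    ∀ (S : Finset V), (G.induce ((↑S : Set V)ᶜ)).IsAcyclic →
    ∃ S' ⊆ S, (S'.card : ℤ) ≤ (G.edgeSet.ncard : ℤ) - Fintype.card V + 1 ∧
      (G.induce ((↑S' : Set V)ᶜ)).IsAcyclic := by
  intro k
  induction k with
  | zero =>
    intro V _ _ G hk hG S hS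
    have hacyc : G.IsAcyclic := by
      intro v c hc
      obtain ⟨w, hadj, q, -⟩ := (Walk.not_nil_iff).1 hc.not_nil
      have : s(v, w) ∈ G.edgeSet := hadj
      have := (Set.ncard_pos (Set.toFinite _)).2 ⟨_, this⟩
      omega
    refine ⟨∅, Finset.empty_subset _, ?_, isAcyclic_induce_of_isAcyclic hacyc _⟩
    haveI : Fintype G.edgeSet := Set.Finite.fintype (Set.toFinite _)
    have htree : G.IsTree := ⟨hG, hacyc⟩
    have hcard := htree.card_edgeFinset
    have hn : G.edgeSet.ncard = G.edgeFinset.card := Set.ncard_eq_toFinset_card' _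
    rw [Finset.card_empty]
    push_cast
    omega
  | succ k ih =>
    intro V _ _ G hk hG S hS
    by_cases hacyc : G.IsAcyclic
    · refine ⟨∅, Finset.empty_subset _, ?_, isAcyclic_induce_of_isAcyclic hacyc _⟩
      haveI : Fintype G.edgeSet := Set.Finite.fintype (Set.toFinite _)
      have htree : G.IsTree := ⟨hG, hacyc⟩
      have hcard := htree.card_edgeFinset
      have hn : G.edgeSet.ncard = G.edgeFinset.card := Set.ncard_eq_toFinset_card' _
      rw [Finset.card_empty]
      push_cast
      omega
    · simp only [IsAcyclic, not_forall, not_not] at hacyc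
      obtain ⟨u, c, hc⟩ := hacyc
      obtain ⟨v, hvsup, hvS⟩ := exists_mem_compl_of_isCycle hS hc
      rw [Set.mem_compl_iff, not_not, Finset.mem_coe] at hvS
      set c₂ := c.rotate v hvsup with hc₂def
      have hc₂ : c₂.IsCycle := hc.rotate hvsup
      obtain ⟨w, hadj, q, hq⟩ := (Walk.not_nil_iff).1 hc₂.not_nil
      have hmem : s(v, w) ∈ c₂.edges := by rw [hq]; simp
      have hreach : (G \ fromEdgeSet {s(v, w)}).Reachable v w :=
        (adj_and_reachable_delete_edges_iff_exists_cycle.2 ⟨v, c₂, hc₂, hmem⟩).2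
      set G' := G \ fromEdgeSet {s(v, w)} with hG'def
      have hle : G' ≤ G := sdiff_le
      haveI : Nonempty V := hG.nonempty
      have hG'conn : G'.Connected :=
        Connected.mk (preconnected_delete_edge hG.preconnected hreach)
      have hG'S : (G'.induce ((↑S : Set V)ᶜ)).IsAcyclic :=
        isAcyclic_induce_mono (le_refl _) (fun a b _ _ h => hle h) hS
      have hlt : G'.edgeSet.ncard < G.edgeSet.ncard := by
        apply Set.ncard_lt_ncard ?_ (Set.toFinite _)
        rw [Set.ssubset_iff_of_subset (edgeSet_mono hle)]
        refine ⟨s(v, w), hadj, ?_⟩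
        rw [mem_edgeSet, hG'def, sdiff_adj]
        rintro ⟨-, h2⟩
        exact h2 (by simp [fromEdgeSet_adj, hadj.ne])
      obtain ⟨S', hsub, hcard, hac⟩ := ih G' (by omega) hG'conn S hG'S
      refine ⟨insert v S', Finset.insert_subset hvS hsub, ?_, ?_⟩
      · have h1 : (insert v S').card ≤ S'.card + 1 := Finset.card_insert_le _ _
        omega
      · refine isAcyclic_induce_mono (G := G) (H := G') ?_ ?_ hac
        · intro x hx
          simp only [Set.mem_compl_iff, Finset.coe_insert, Set.mem_insert_iff,
            Finset.mem_coe, not_or] at hx ⊢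
          exact hx.2
        · intro a b ha hb h
          simp only [Set.mem_compl_iff, Finset.coe_insert, Set.mem_insert_iff,
            Finset.mem_coe, not_or] at ha hb
          rw [hG'def, sdiff_adj]
          refine ⟨h, fun he => ?_⟩
          rw [fromEdgeSet_adj] at he
          have := he.1
          simp only [Set.mem_singleton_iff, Sym2.eq_iff] at this
          rcases this with ⟨rfl, rfl⟩ | ⟨rfl, rfl⟩
          · exact ha.1 rfl
          · exact hb.1 rfl


end ESAD

theorem exists_small_acyclic_deletion {V : Type*} [Fintype V] [DecidableEq V]
    (G : SimpleGraph V) [DecidableRel G.Adj] (hG : G.Connected)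
    (S : Finset V) (hS : (G.induce ((↑S : Set V)ᶜ)).IsAcyclic) :
    ∃ S' ⊆ S, (S'.card : ℤ) ≤ (G.edgeFinset.card : ℤ) - Fintype.card V + 1 ∧
      (G.induce ((↑S' : Set V)ᶜ)).IsAcyclic := by
  obtain ⟨S', hsub, hcard, hac⟩ := ESAD.aux G.edgeSet.ncard G le_rfl hG S hS
  have hn : G.edgeSet.ncard = G.edgeFinset.card := Set.ncard_eq_toFinset_card' _
  exact ⟨S', hsub, by rw [← hn]; exact_mod_cast hcard, hac⟩
end

section
/- For a connected graph G with n vertices and m edges, there exist optimal vertex sets for T⁺(G) and for T⁻(G) of size at most m - n + 1. -/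
open SimpleGraph

namespace TOpt


variable {V : Type*} {G : SimpleGraph V}

lemma exists_walk_induce {W : Set V} :
    ∀ {a b : V} (p : G.Walk a b) (hp : ∀ x ∈ p.support, x ∈ W),
    ∃ q : (G.induce W).Walk ⟨a, hp a p.start_mem_support⟩ ⟨b, hp b p.end_mem_support⟩,
      q.support.map Subtype.val = p.support ∧
      q.edges.map (Sym2.map Subtype.val) = p.edges := by
  intro a b p
  induction p with
  | nil => intro hp; exact ⟨.nil, by simp, by simp⟩
  | @cons a c b h p ih =>
      intro hp
      obtain ⟨q, hq1, hq2⟩ := ih (fun x hx => hp x (by simp [hx]))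
      refine ⟨.cons (by simpa using h) q, ?_, ?_⟩ <;> simp [hq1, hq2]

lemma exists_cycle_induce {W : Set V} {v : V} (c : G.Walk v v) (hc : c.IsCycle)
    (hW : ∀ x ∈ c.support, x ∈ W) :
    ∃ (v' : W) (q : (G.induce W).Walk v' v'), q.IsCycle := by
  obtain ⟨q, hq1, hq2⟩ := exists_walk_induce c hW
  refine ⟨_, q, ⟨⟨⟨?_⟩, ?_⟩, ?_⟩⟩
  · have := hc.isTrail.edges_nodup
    rw [← hq2] at this
    exact this.of_map _
  · intro hnil
    have : c.edges = [] := by rw [← hq2, hnil]; simp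
    have hlen : c.length = 0 := by
      simpa using congrArg List.length this
    exact hc.ne_nil (by cases c with
      | nil => rfl
      | cons h p => simp at hlen)
  · have := hc.support_nodup
    rw [← hq1, ← List.map_tail] at this
    exact this.of_map _

lemma cycle_of_induce_cycle {W : Set V} {v' : ↥W} (q : (G.induce W).Walk v' v')
    (hq : q.IsCycle) :
    ∃ (v : V) (c : G.Walk v v), c.IsCycle ∧ ∀ x ∈ c.support, x ∈ W := by
  refine ⟨v', q.map (Embedding.induce W).toHom, hq.map Subtype.val_injective, ?_⟩
  intro x hx
  replace hx : x ∈ q.support.map Subtype.val :=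
    (congrArg (x ∈ ·) (Walk.support_map (Embedding.induce W).toHom q)).mp hx
  obtain ⟨y, _, rfl⟩ := List.mem_map.mp hx
  exact y.2





lemma isCycle_transfer {v : V} {c : G.Walk v v} (H : SimpleGraph V)
    (h : ∀ e ∈ c.edges, e ∈ H.edgeSet) (hc : c.IsCycle) : (c.transfer H h).IsCycle := by
  refine ⟨⟨⟨?_⟩, ?_⟩, ?_⟩
  · rw [Walk.edges_transfer]; exact hc.isTrail.edges_nodup
  · intro hnil
    have := congrArg Walk.length hnil
    rw [Walk.length_transfer] at this
    exact hc.ne_nil (by cases c with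
      | nil => rfl
      | cons h p => simp at this)
  · rw [Walk.support_transfer]; exact hc.support_nodup

lemma count_key [Fintype V] :
    ∀ (M : ℕ) (G : SimpleGraph V), G.edgeSet.ncard = M → G.Connected →
    ∀ S : Finset V,
      (∀ ⦃u : V⦄ (c : G.Walk u u), c.IsCycle → ∃ x ∈ c.support, x ∈ S) →
      (∀ v ∈ S, ∃ (u : V) (c : G.Walk u u), c.IsCycle ∧ v ∈ c.support ∧
          ∀ x ∈ c.support, x ∈ S → x = v) →
      Fintype.card V + S.card ≤ M + 1 := by
  intro M
  induction M using Nat.strong_induction_on with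
  | _ M ih =>
    intro G hM hconn S hacyc hcyc
    classical
    rcases Finset.eq_empty_or_nonempty S with rfl | ⟨v, hv⟩
    · have hic : G.IsAcyclic := by
        intro u c hc
        obtain ⟨x, -, hx⟩ := hacyc c hc
        simp at hx
      haveI : Fintype G.edgeSet := (Set.toFinite _).fintype
      have htree : G.IsTree := ⟨hconn, hic⟩
      have h1 := htree.card_edgeFinset
      have h2 : G.edgeSet.ncard = G.edgeFinset.card := by
        rw [Set.ncard_eq_toFinset_card']
        simp [edgeFinset]
      rw [hM] at h2
      rw [Finset.card_empty]
      omega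
    · obtain ⟨u, c, hc, hvsupp, havoid⟩ := hcyc v hv
      set c' := c.rotate (h := hvsupp) with hc'def
      have hc' : c'.IsCycle := hc.rotate hvsupp
      have hnotnil : ¬ c'.Nil := fun h => hc'.ne_nil h.eq_nil
      obtain ⟨w, hadj, q, hq⟩ := Walk.not_nil_iff.mp hnotnil
      have hedge : s(v, w) ∈ c.edges := by
        refine (Walk.rotate_edges c (h := hvsupp)).mem_iff.mp ?_
        rw [← hc'def, hq]; simp
      have hwsupp : w ∈ c.support := c.snd_mem_support_of_mem_edges hedge
      have hwv : w ≠ v := hadj.ne'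
      have hwS : w ∉ S := fun h => hwv (havoid w hwsupp h)
      have heG : s(v, w) ∈ G.edgeSet := hadj
      set e : Sym2 V := s(v, w) with he_def
      set G' := G.deleteEdges {e} with hG'def
      -- the rest of the cycle avoids e
      have hq_edges : e ∉ q.edges := by
        have := hc'.isTrail.edges_nodup
        rw [hq] at this
        simpa using (List.nodup_cons.mp (by simpa using this)).1
      have hqdel : ∀ e' ∈ q.edges, e' ∉ ({e} : Set (Sym2 V)) := by
        intro e' he' h'
        rw [Set.mem_singleton_iff] at h'
        exact hq_edges (h' ▸ he')
      have hreachwv : G'.Reachable w v := ⟨q.toDeleteEdges {e} hqdel⟩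
      -- G' connected
      have hadjreach : ∀ a b, G.Adj a b → G'.Reachable a b := by
        intro a b hab
        by_cases hE : s(a, b) = e
        · rw [he_def, Sym2.eq_iff] at hE
          rcases hE with ⟨rfl, rfl⟩ | ⟨rfl, rfl⟩
          · exact hreachwv.symm
          · exact hreachwv
        · exact Adj.reachable (deleteEdges_adj.mpr ⟨hab, by simpa using hE⟩)
      have hconn' : G'.Connected := by
        have hpre : G'.Preconnected := by
          intro a b
          obtain ⟨p⟩ := hconn.preconnected a b
          induction p with
          | nil => rfl
          | cons h p ih => exact (hadjreach _ _ h).trans ih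
        haveI := hconn.nonempty
        exact Connected.mk hpre
      have hM' : G'.edgeSet.ncard = M - 1 := by
        rw [hG'def, edgeSet_deleteEdges, Set.ncard_diff_singleton_of_mem heG, hM]
      have hMpos : 1 ≤ M := by
        rw [← hM]
        exact (Set.ncard_pos (Set.toFinite _)).mpr ⟨e, heG⟩
      have hle : G' ≤ G := deleteEdges_le _
      -- lifting G' cycles to G
      have hlift : ∀ {a : V} (c2 : G'.Walk a a), c2.IsCycle →
          ∃ c3 : G.Walk a a, c3.IsCycle ∧ c3.support = c2.support := by
        intro a c2 hc2
        refine ⟨c2.transfer G (fun e' he' => (edgeSet_mono hle (c2.edges_subset_edgeSet he'))), ?_, ?_⟩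
        · exact isCycle_transfer G _ hc2
        · exact Walk.support_transfer _ _
      -- pushing G cycles avoiding v down to G'
      have hpush : ∀ {a : V} (c2 : G.Walk a a), c2.IsCycle → v ∉ c2.support →
          ∃ c3 : G'.Walk a a, c3.IsCycle ∧ c3.support = c2.support := by
        intro a c2 hc2 hvs
        have hne : ∀ e' ∈ c2.edges, e' ∉ ({e} : Set (Sym2 V)) := by
          intro e' he' h'
          rw [Set.mem_singleton_iff] at h'
          subst h'
          exact hvs (c2.fst_mem_support_of_mem_edges he')
        exact ⟨c2.toDeleteEdges {e} hne, isCycle_transfer _ _ hc2, Walk.support_transfer _ _⟩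
      by_cases hnew : ∃ (a : V) (c2 : G'.Walk a a), c2.IsCycle ∧
          ∀ x ∈ c2.support, x ∈ S → x = v
      · -- keep S
        have hacyc' : ∀ ⦃a : V⦄ (c2 : G'.Walk a a), c2.IsCycle → ∃ x ∈ c2.support, x ∈ S := by
          intro a c2 hc2
          obtain ⟨c3, hc3, hs3⟩ := hlift c2 hc2
          obtain ⟨x, hx1, hx2⟩ := hacyc c3 hc3
          exact ⟨x, hs3 ▸ hx1, hx2⟩
        have hcyc' : ∀ u' ∈ S, ∃ (a : V) (c2 : G'.Walk a a), c2.IsCycle ∧ u' ∈ c2.support ∧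
            ∀ x ∈ c2.support, x ∈ S → x = u' := by
          intro u' hu'
          by_cases hu'v : u' = v
          · subst hu'v
            obtain ⟨a, c2, hc2, hprop⟩ := hnew
            obtain ⟨x, hx1, hx2⟩ := hacyc' c2 hc2
            exact ⟨a, c2, hc2, (hprop x hx1 hx2) ▸ hx1, hprop⟩
          · obtain ⟨a, c2, hc2, hmem, hprop⟩ := hcyc u' hu'
            have hvnot : v ∉ c2.support := fun hvs => hu'v ((hprop v hvs hv).symm)
            obtain ⟨c3, hc3, hs3⟩ := hpush c2 hc2 hvnot
            exact ⟨a, c3, hc3, hs3 ▸ hmem, fun x hx => hprop x (hs3 ▸ hx)⟩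
        have := ih (M - 1) (by omega) G' hM' hconn' S hacyc' hcyc'
        omega
      · -- shrink S to S.erase v
        push_neg at hnew
        have hacyc' : ∀ ⦃a : V⦄ (c2 : G'.Walk a a), c2.IsCycle →
            ∃ x ∈ c2.support, x ∈ S.erase v := by
          intro a c2 hc2
          obtain ⟨x, hx1, hx2, hx3⟩ := hnew a c2 hc2
          exact ⟨x, hx1, Finset.mem_erase.mpr ⟨hx3, hx2⟩⟩
        have hcyc' : ∀ u' ∈ S.erase v, ∃ (a : V) (c2 : G'.Walk a a), c2.IsCycle ∧
            u' ∈ c2.support ∧ ∀ x ∈ c2.support, x ∈ S.erase v → x = u' := by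
          intro u' hu'
          obtain ⟨hu'v, hu'S⟩ := Finset.mem_erase.mp hu'
          obtain ⟨a, c2, hc2, hmem, hprop⟩ := hcyc u' hu'S
          have hvnot : v ∉ c2.support := fun hvs => hu'v ((hprop v hvs hv).symm)
          obtain ⟨c3, hc3, hs3⟩ := hpush c2 hc2 hvnot
          exact ⟨a, c3, hc3, hs3 ▸ hmem, fun x hx hxS =>
            hprop x (hs3 ▸ hx) (Finset.mem_erase.mp hxS).2⟩
        have hcard : (S.erase v).card = S.card - 1 := Finset.card_erase_of_mem hv
        have hSpos : 1 ≤ S.card := Finset.card_pos.mpr ⟨v, hv⟩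
        have := ih (M - 1) (by omega) G' hM' hconn' (S.erase v) hacyc' hcyc'
        omega





noncomputable def pc (G : SimpleGraph V) (U : Set V) : ℕ :=
  sInf {p | IsPathCoverOn G U p}

lemma inducesPath_singleton (G : SimpleGraph V) (x : V) : InducesPath G {x} := by
  refine ⟨1, ⟨⟨Equiv.ofUnique _ _, ?_⟩⟩⟩
  intro a b
  have hab : a = b := Subsingleton.elim a b
  subst hab
  constructor <;> intro h <;> exact absurd h (SimpleGraph.irrefl _)

/-- Transfer of induce along an iso. -/
noncomputable def isoInduce {A B : Type*} {H : SimpleGraph A} {K : SimpleGraph B}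
    (f : H ≃g K) (X : Set A) : H.induce X ≃g K.induce (⇑f '' X) where
  toEquiv := f.toEquiv.image X
  map_rel_iff' := by
    intro a b
    simp [Equiv.image, f.map_rel_iff]

/-- (G.induce U).induce W iso G.induce (val '' W) -/
noncomputable def induceInduceIso (U : Set V) (W : Set ↥U) :
    (G.induce U).induce W ≃g G.induce (Subtype.val '' W) where
  toEquiv := Equiv.Set.image Subtype.val W Subtype.val_injective
  map_rel_iff' := by
    intro a b
    simp [Equiv.Set.image, Equiv.Set.imageOfInjOn]

lemma inducesPath_induce_iff (U : Set V) (X : Set ↥U) :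
    InducesPath (G.induce U) X ↔ InducesPath G (Subtype.val '' X) := by
  constructor
  · rintro ⟨n, ⟨f⟩⟩
    exact ⟨n, ⟨((induceInduceIso U X).symm.trans f)⟩⟩
  · rintro ⟨n, ⟨f⟩⟩
    exact ⟨n, ⟨((induceInduceIso U X).trans f)⟩⟩

lemma isPathCoverOn_induce_iff (U : Set V) (p : ℕ) :
    IsPathCoverOn (G.induce U) Set.univ p ↔ IsPathCoverOn G U p := by
  constructor
  · rintro ⟨parts, hne, hdis, hun, hpath⟩
    refine ⟨fun i => Subtype.val '' parts i, fun i => (hne i).image _, ?_, ?_, ?_⟩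
    · intro i j hij
      exact (Set.disjoint_image_iff Subtype.val_injective).mpr (hdis hij)
    · rw [← Set.image_iUnion, hun, Subtype.coe_image_univ]
    · intro i
      exact (inducesPath_induce_iff U (parts i)).mp (hpath i)
  · rintro ⟨parts, hne, hdis, hun, hpath⟩
    have hsub : ∀ i, parts i ⊆ U := fun i => hun ▸ Set.subset_iUnion parts i
    refine ⟨fun i => Subtype.val ⁻¹' parts i, ?_, ?_, ?_, ?_⟩
    · intro i
      obtain ⟨x, hx⟩ := hne i
      exact ⟨⟨x, hsub i hx⟩, hx⟩
    · intro i j hij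
      exact Disjoint.preimage _ (hdis hij)
    · rw [← Set.preimage_iUnion, hun]
      ext x
      simp [x.2]
    · intro i
      rw [inducesPath_induce_iff]
      have : Subtype.val '' (Subtype.val ⁻¹' parts i : Set ↥U) = parts i := by
        rw [Subtype.image_preimage_coe]
        exact Set.inter_eq_self_of_subset_right (hsub i)
      rw [this]
      exact hpath i

lemma pathCoverNumber_induce_eq (U : Set V) :
    pathCoverNumber (G.induce U) = pc G U := by
  unfold pathCoverNumber pc
  congr 1
  ext p
  exact isPathCoverOn_induce_iff U p

lemma exists_pathCover [Fintype V] (G : SimpleGraph V) (U : Set V) :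
    ∃ p, IsPathCoverOn G U p := by
  haveI : Fintype ↥U := (Set.toFinite U).fintype
  refine ⟨Fintype.card ↥U, fun i => {((Fintype.equivFin ↥U).symm i : V)}, fun i => ⟨_, rfl⟩,
    ?_, ?_, fun i => inducesPath_singleton G _⟩
  · intro i j hij
    simp only [Set.disjoint_singleton_left, Set.mem_singleton_iff]
    intro h
    exact hij ((Fintype.equivFin ↥U).symm.injective (Subtype.val_injective h))
  · ext x
    simp only [Set.mem_iUnion, Set.mem_singleton_iff]
    constructor
    · rintro ⟨i, rfl⟩; exact ((Fintype.equivFin ↥U).symm i).2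
    · intro hx; exact ⟨Fintype.equivFin ↥U ⟨x, hx⟩, by simp⟩

lemma pc_spec [Fintype V] (G : SimpleGraph V) (U : Set V) : IsPathCoverOn G U (pc G U) :=
  Nat.sInf_mem (exists_pathCover G U)

lemma pc_le {U : Set V} {q : ℕ} (h : IsPathCoverOn G U q) : pc G U ≤ q :=
  Nat.sInf_le h


lemma cover_of_family [Fintype V] {ι : Type} [Fintype ι] (G : SimpleGraph V)
    (parts : ι → Set V) (U : Set V)
    (hdis : Pairwise fun i j => Disjoint (parts i) (parts j))
    (hun : (⋃ i, parts i) = U)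
    (hp : ∀ i, (parts i).Nonempty → InducesPath G (parts i)) :
    ∃ s : Finset ι, (∀ i, i ∈ s ↔ (parts i).Nonempty) ∧ IsPathCoverOn G U s.card := by
  classical
  set s : Finset ι := Finset.univ.filter (fun i => (parts i).Nonempty) with hs
  have hmem : ∀ i, i ∈ s ↔ (parts i).Nonempty := by
    intro i; simp [hs]
  refine ⟨s, hmem, fun j => parts (s.equivFin.symm j : ι), ?_, ?_, ?_, ?_⟩
  · intro j
    exact (hmem _).mp (s.equivFin.symm j).2
  · intro i j hij
    refine hdis ?_
    intro h
    exact hij (s.equivFin.symm.injective (Subtype.val_injective h))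
  · ext x
    simp only [Set.mem_iUnion]
    constructor
    · rintro ⟨j, hj⟩
      exact hun ▸ Set.mem_iUnion.mpr ⟨_, hj⟩
    · intro hx
      obtain ⟨i, hi⟩ := Set.mem_iUnion.mp (hun ▸ hx : x ∈ ⋃ i, parts i)
      have his : i ∈ s := (hmem i).mpr ⟨x, hi⟩
      refine ⟨s.equivFin ⟨i, his⟩, ?_⟩
      simp [hi]
  · intro j
    exact hp _ ((hmem _).mp (s.equivFin.symm j).2)

lemma pc_insert_le [Fintype V] (G : SimpleGraph V) (U : Set V) (v : V) :
    pc G (insert v U) ≤ pc G U + 1 := by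
  by_cases hv : v ∈ U
  · rw [Set.insert_eq_self.mpr hv]; omega
  · obtain ⟨parts, hne, hdis, hun, hpath⟩ := pc_spec G U
    set F : Option (Fin (pc G U)) → Set V := fun o => o.elim {v} parts with hF
    have hdis' : Pairwise fun i j => Disjoint (F i) (F j) := by
      intro i j hij
      have hvp : ∀ k, Disjoint ({v} : Set V) (parts k) := by
        intro k
        rw [Set.disjoint_singleton_left]
        intro h
        exact hv (hun ▸ Set.mem_iUnion.mpr ⟨k, h⟩)
      rcases i with _ | i <;> rcases j with _ | j
      · exact absurd rfl hij
      · exact hvp j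
      · exact (hvp i).symm
      · exact hdis (fun h => hij (by rw [h]))
    have hun' : (⋃ i, F i) = insert v U := by
      ext x
      simp only [Set.mem_iUnion, Set.mem_insert_iff]
      constructor
      · rintro ⟨(_ | i), hx⟩
        · exact Or.inl hx
        · exact Or.inr (hun ▸ Set.mem_iUnion.mpr ⟨i, hx⟩)
      · rintro (rfl | hx)
        · exact ⟨none, rfl⟩
        · obtain ⟨i, hi⟩ := Set.mem_iUnion.mp (show x ∈ ⋃ i, parts i by rw [hun]; exact hx)
          exact ⟨some i, hi⟩
    obtain ⟨s, _, hcov⟩ := cover_of_family G F (insert v U) hdis' hun'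
      (fun i _ => by
        rcases i with _ | i
        · exact inducesPath_singleton G v
        · exact hpath i)
    calc pc G (insert v U) ≤ s.card := pc_le hcov
      _ ≤ Fintype.card (Option (Fin (pc G U))) := Finset.card_le_univ s
      _ = pc G U + 1 := by simp

noncomputable def pathGraphIio (n t : ℕ) (ht : t ≤ n) :
    (pathGraph n).induce {j : Fin n | j.val < t} ≃g pathGraph t where
  toEquiv :=
  { toFun := fun x => ⟨x.val.val, x.2⟩
    invFun := fun y => ⟨⟨y.val, lt_of_lt_of_le y.isLt ht⟩, y.isLt⟩
    left_inv := fun x => by ext; rfl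
    right_inv := fun y => by ext; rfl }
  map_rel_iff' := by
    intro a b
    simp only [Equiv.coe_fn_mk, comap_adj, Function.Embedding.coe_subtype, pathGraph_adj]

noncomputable def pathGraphIoi (n t : ℕ) (ht : t < n) :
    (pathGraph n).induce {j : Fin n | t < j.val} ≃g pathGraph (n - t - 1) where
  toEquiv :=
  { toFun := fun x => ⟨x.val.val - t - 1, by
      have h1 := x.val.isLt
      have h2 : t < x.val.val := x.2
      omega⟩
    invFun := fun y => ⟨⟨y.val + t + 1, by have := y.isLt; omega⟩, by
      simp only [Set.mem_setOf_eq]; omega⟩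
    left_inv := fun x => by
      have h2 : t < x.val.val := x.2
      ext
      simp
      omega
    right_inv := fun y => by ext; simp; omega }
  map_rel_iff' := by
    intro a b
    have ha : t < a.val.val := a.2
    have hb : t < b.val.val := b.2
    simp only [Equiv.coe_fn_mk, comap_adj, Function.Embedding.coe_subtype, pathGraph_adj]
    omega

lemma inducesPath_of_iso_image {n : ℕ} {W : Set V} (f : G.induce W ≃g pathGraph n)
    (Y : Set (Fin n)) (hY : InducesPath (pathGraph n) Y) :
    InducesPath G (Subtype.val '' (⇑f ⁻¹' Y)) := by
  rw [← inducesPath_induce_iff]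
  obtain ⟨m, ⟨g⟩⟩ := hY
  have himg : ⇑f '' (⇑f ⁻¹' Y) = Y := Set.image_preimage_eq Y f.toEquiv.surjective
  exact ⟨m, ⟨(isoInduce f (⇑f ⁻¹' Y)).trans (by rw [himg]; exact g)⟩⟩

lemma split_inducesPath {W : Set V} (hW : InducesPath G W) {v : V} (hv : v ∈ W) :
    ∃ A B : Set V, A ∪ B = W \ {v} ∧ Disjoint A B ∧
      (∀ x, (A = x ∨ B = x) → x.Nonempty → InducesPath G x) := by
  obtain ⟨n, ⟨f⟩⟩ := hW
  set t := f ⟨v, hv⟩ with ht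
  set A := Subtype.val '' (⇑f ⁻¹' {j : Fin n | j.val < t.val}) with hA
  set B := Subtype.val '' (⇑f ⁻¹' {j : Fin n | t.val < j.val}) with hB
  refine ⟨A, B, ?_, ?_, ?_⟩
  · rw [hA, hB, ← Set.image_union, ← Set.preimage_union]
    ext x
    simp only [Set.mem_image, Set.mem_preimage, Set.mem_union, Set.mem_setOf_eq,
      Set.mem_diff, Set.mem_singleton_iff]
    constructor
    · rintro ⟨y, hy, rfl⟩
      refine ⟨y.2, ?_⟩
      rintro rfl
      have : f y = t := by rw [ht]
      omega
    · rintro ⟨hxW, hxv⟩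
      refine ⟨⟨x, hxW⟩, ?_, rfl⟩
      have : f ⟨x, hxW⟩ ≠ t := by
        intro h
        exact hxv (congrArg Subtype.val (f.toEquiv.injective (h.trans ht ▸ rfl) : (⟨x, hxW⟩ : ↥W) = ⟨v, hv⟩))
      have := Fin.val_ne_iff.mpr this
      omega
  · rw [hA, hB, Set.disjoint_image_iff Subtype.val_injective]
    refine Disjoint.preimage _ ?_
    rw [Set.disjoint_left]
    intro j hj1 hj2
    simp only [Set.mem_setOf_eq] at hj1 hj2
    omega
  · rintro x (rfl | rfl) hx
    · refine inducesPath_of_iso_image f _ ?_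
      obtain ⟨t', ⟨g⟩⟩ : ∃ t' : ℕ, Nonempty ((pathGraph n).induce {j : Fin n | j.val < t.val} ≃g pathGraph t') :=
        ⟨t.val, ⟨pathGraphIio n t.val t.isLt.le⟩⟩
      exact ⟨t', ⟨g⟩⟩
    · refine inducesPath_of_iso_image f _ ?_
      have htn : t.val < n := t.isLt
      exact ⟨n - t.val - 1, ⟨pathGraphIoi n t.val htn⟩⟩

lemma pc_diff_singleton_le [Fintype V] (G : SimpleGraph V) (U : Set V) (v : V) :
    pc G (U \ {v}) ≤ pc G U + 1 := by
  classical
  by_cases hv : v ∈ U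
  swap
  · rw [Set.diff_singleton_eq_self hv]; omega
  have hspec := pc_spec G U
  set p := pc G U with hp
  obtain ⟨parts, hne, hdis, hun, hpath⟩ := hspec
  obtain ⟨i₀, hi₀⟩ := Set.mem_iUnion.mp (show v ∈ ⋃ i, parts i by rw [hun]; exact hv)
  obtain ⟨A, B, hAB, hABdis, hABpath⟩ := split_inducesPath (hpath i₀) hi₀
  have hAsub : A ⊆ parts i₀ \ {v} := hAB ▸ Set.subset_union_left
  have hBsub : B ⊆ parts i₀ \ {v} := hAB ▸ Set.subset_union_right
  have hvonly : ∀ j, j ≠ i₀ → v ∉ parts j := by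
    intro j hj hvj
    exact Set.disjoint_left.mp (hdis hj) hvj hi₀
  set F : Fin p ⊕ Bool → Set V := fun x =>
    Sum.elim (fun i => if i = i₀ then ∅ else parts i) (fun b => if b then B else A) x with hF
  have hFsub : ∀ x, F x ⊆ U \ {v} := by
    rintro (i | b) <;> simp only [hF, Sum.elim_inl, Sum.elim_inr]
    · split
      · exact Set.empty_subset _
      · rename_i hii
        intro x hx
        exact ⟨hun ▸ Set.mem_iUnion.mpr ⟨i, hx⟩, fun hxx => hvonly i hii (hxx ▸ hx)⟩
    · split
      · exact hBsub.trans (Set.diff_subset_diff_left (hun ▸ Set.subset_iUnion parts i₀))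
      · exact hAsub.trans (Set.diff_subset_diff_left (hun ▸ Set.subset_iUnion parts i₀))
  have hdis' : Pairwise fun x y => Disjoint (F x) (F y) := by
    have hDj : ∀ (j : Fin p), j ≠ i₀ → ∀ C, C ⊆ parts i₀ \ {v} → Disjoint (parts j) C := by
      intro j hj C hC
      exact Set.disjoint_of_subset_right (hC.trans Set.diff_subset) (hdis hj)
    rintro (i | b) (j | c) hxy <;> simp only [hF, Sum.elim_inl, Sum.elim_inr]
    · by_cases hi : i = i₀
      · rw [if_pos hi]; exact Set.empty_disjoint _
      · by_cases hj : j = i₀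
        · rw [if_neg hi, if_pos hj]; exact Set.disjoint_empty _
        · rw [if_neg hi, if_neg hj]
          exact hdis (fun h => hxy (by rw [h]))
    · by_cases hi : i = i₀
      · rw [if_pos hi]; exact Set.empty_disjoint _
      · rw [if_neg hi]
        cases c
        · exact hDj i hi A hAsub
        · exact hDj i hi B hBsub
    · by_cases hj : j = i₀
      · rw [if_pos hj]; exact Set.disjoint_empty _
      · rw [if_neg hj]
        cases b
        · exact (hDj j hj A hAsub).symm
        · exact (hDj j hj B hBsub).symm
    · have hbc : b ≠ c := fun h => hxy (by rw [h])
      cases b <;> cases c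
      · exact absurd rfl hbc
      · exact show Disjoint A B from hABdis
      · exact show Disjoint B A from hABdis.symm
      · exact absurd rfl hbc
  have hun' : (⋃ x, F x) = U \ {v} := by
    apply Set.Subset.antisymm
    · exact Set.iUnion_subset hFsub
    · rintro x ⟨hxU, hxv⟩
      simp only [Set.mem_singleton_iff] at hxv
      obtain ⟨j, hj⟩ := Set.mem_iUnion.mp (show x ∈ ⋃ i, parts i by rw [hun]; exact hxU)
      by_cases hji : j = i₀
      · subst hji
        have : x ∈ A ∪ B := hAB ▸ ⟨hj, hxv⟩
        rcases this with h | h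
        · exact Set.mem_iUnion.mpr ⟨Sum.inr false, by simp [hF, h]⟩
        · exact Set.mem_iUnion.mpr ⟨Sum.inr true, by simp [hF, h]⟩
      · exact Set.mem_iUnion.mpr ⟨Sum.inl j, by simp [hF, hji, hj]⟩
  obtain ⟨s, hsmem, hcov⟩ := cover_of_family G F (U \ {v}) hdis' hun' (by
    rintro (i | b) hne'
    · simp only [hF, Sum.elim_inl] at hne' ⊢
      by_cases hi : i = i₀
      · rw [if_pos hi] at hne'; exact absurd hne' (by simp)
      · rw [if_neg hi] at hne' ⊢; exact hpath i
    · simp only [hF, Sum.elim_inr] at hne' ⊢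
      cases b
      · exact hABpath A (Or.inl rfl) hne'
      · exact hABpath B (Or.inr rfl) hne')
  have hcard : s.card ≤ p + 1 := by
    have hni : Sum.inl i₀ ∉ s := by
      rw [hsmem]
      simp [hF]
    have : s ⊆ Finset.univ.erase (Sum.inl i₀) :=
      fun x hx => Finset.mem_erase.mpr ⟨fun h => hni (h ▸ hx), Finset.mem_univ x⟩
    calc s.card ≤ (Finset.univ.erase (Sum.inl i₀)).card := Finset.card_le_card this
      _ = Fintype.card (Fin p ⊕ Bool) - 1 := by
          rw [Finset.card_erase_of_mem (Finset.mem_univ _), Finset.card_univ]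
      _ = p + 1 := by simp
  exact (pc_le hcov).trans hcard

lemma pc_union_finset_le [Fintype V] (G : SimpleGraph V) (U : Set V) (D : Finset V) :
    pc G (U ∪ ↑D) ≤ pc G U + D.card := by
  classical
  induction D using Finset.induction_on with
  | empty => simp
  | @insert a D ha ih =>
      have : U ∪ ↑(insert a D) = insert a (U ∪ ↑D) := by
        ext x
        simp only [Finset.coe_insert, Set.mem_union, Set.mem_insert_iff]
        tauto
      rw [this, Finset.card_insert_of_notMem ha]
      calc pc G (insert a (U ∪ ↑D)) ≤ pc G (U ∪ ↑D) + 1 := pc_insert_le G _ a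
        _ ≤ pc G U + D.card + 1 := by omega

lemma pc_diff_finset_le [Fintype V] (G : SimpleGraph V) (U : Set V) (D : Finset V) :
    pc G (U \ ↑D) ≤ pc G U + D.card := by
  classical
  induction D using Finset.induction_on with
  | empty => simp
  | @insert a D ha ih =>
      have : U \ ↑(insert a D) = (U \ ↑D) \ {a} := by
        ext x
        simp only [Finset.coe_insert, Set.mem_diff, Set.mem_insert_iff, Set.mem_singleton_iff]
        tauto
      rw [this, Finset.card_insert_of_notMem ha]
      calc pc G ((U \ ↑D) \ {a}) ≤ pc G (U \ ↑D) + 1 := pc_diff_singleton_le G _ a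
        _ ≤ pc G U + D.card + 1 := by omega

variable {V : Type*} {G : SimpleGraph V}

lemma acy_iff (G : SimpleGraph V) (S : Finset V) :
    (G.induce ((↑S : Set V)ᶜ)).IsAcyclic ↔
    ∀ ⦃u : V⦄ (c : G.Walk u u), c.IsCycle → ∃ x ∈ c.support, x ∈ S := by
  constructor
  · intro h u c hc
    by_contra hno
    push_neg at hno
    obtain ⟨v', q, hq⟩ := exists_cycle_induce c hc (fun x hx => hno x hx)
    exact h q hq
  · intro h v' c hc
    obtain ⟨v, c', hc', hsub⟩ := cycle_of_induce_cycle c hc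
    obtain ⟨x, hx1, hx2⟩ := h c' hc'
    exact (hsub x hx1) hx2

lemma exists_minimal {P : Finset V → Prop} [DecidableEq V] :
    ∀ (n : ℕ) (S₀ : Finset V), S₀.card ≤ n → P S₀ →
    ∃ S, S ⊆ S₀ ∧ P S ∧ ∀ v ∈ S, ¬ P (S.erase v) := by
  intro n
  induction n with
  | zero =>
      intro S₀ hc hP
      rw [Nat.le_zero, Finset.card_eq_zero] at hc
      subst hc
      exact ⟨∅, Finset.Subset.refl _, hP, fun v hv => absurd hv (Finset.notMem_empty v)⟩
  | succ n ih =>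
      intro S₀ hc hP
      by_cases hex : ∃ v ∈ S₀, P (S₀.erase v)
      · obtain ⟨v, hv, hPe⟩ := hex
        obtain ⟨S, hsub, h1, h2⟩ := ih (S₀.erase v)
          (by rw [Finset.card_erase_of_mem hv]; omega) hPe
        exact ⟨S, hsub.trans (Finset.erase_subset _ _), h1, h2⟩
      · push_neg at hex
        exact ⟨S₀, Finset.Subset.refl _, hP, hex⟩


end TOpt

theorem exists_small_optimal_sets {V : Type*} [Fintype V] [DecidableEq V]
    (G : SimpleGraph V) [DecidableRel G.Adj] (hG : G.Connected) :
    (∃ S : Finset V, (G.induce ((↑S : Set V)ᶜ)).IsAcyclic ∧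
      Tplus G = pathCoverNumber (G.induce ((↑S : Set V)ᶜ)) + S.card ∧
      (S.card : ℤ) ≤ (G.edgeFinset.card : ℤ) - Fintype.card V + 1) ∧
    (∃ S : Finset V, (G.induce ((↑S : Set V)ᶜ)).IsAcyclic ∧
      Tminus G = (pathCoverNumber (G.induce ((↑S : Set V)ᶜ)) : ℤ) - S.card ∧
      (S.card : ℤ) ≤ (G.edgeFinset.card : ℤ) - Fintype.card V + 1) := by
  classical
  -- notation
  set Acy : Finset V → Prop := fun S => (G.induce ((↑S : Set V)ᶜ)).IsAcyclic with hAcy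
  -- cardinality bound for minimal sets
  have hmn : ∀ S : Finset V, Acy S → (∀ v ∈ S, ¬ Acy (S.erase v)) →
      (S.card : ℤ) ≤ (G.edgeFinset.card : ℤ) - Fintype.card V + 1 := by
    intro S h1 h2
    have hacyc := (TOpt.acy_iff G S).mp h1
    have hcyc : ∀ v ∈ S, ∃ (u : V) (c : G.Walk u u), c.IsCycle ∧ v ∈ c.support ∧
        ∀ x ∈ c.support, x ∈ S → x = v := by
      intro v hv
      have h3 := h2 v hv
      rw [hAcy] at h3
      simp only at h3
      rw [TOpt.acy_iff] at h3
      push_neg at h3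
      obtain ⟨u, c, hc, hmiss⟩ := h3
      have hprop : ∀ x ∈ c.support, x ∈ S → x = v := by
        intro x hx hxS
        by_contra hxv
        exact (hmiss x hx) (Finset.mem_erase.mpr ⟨hxv, hxS⟩)
      have hvmem : v ∈ c.support := by
        obtain ⟨x, hx1, hx2⟩ := hacyc c hc
        exact (hprop x hx1 hx2) ▸ hx1
      exact ⟨u, c, hc, hvmem, hprop⟩
    have hkey := TOpt.count_key (G.edgeSet.ncard) G rfl hG S hacyc hcyc
    have hm : G.edgeSet.ncard = G.edgeFinset.card := Set.ncard_eq_toFinset_card' _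
    rw [hm] at hkey
    omega
  -- path cover number translation
  have hpcn : ∀ S : Finset V, pathCoverNumber (G.induce ((↑S : Set V)ᶜ)) =
      TOpt.pc G ((↑S : Set V)ᶜ) := fun S => TOpt.pathCoverNumber_induce_eq _
  -- complement identities
  have hcompl1 : ∀ S S₀ : Finset V, S ⊆ S₀ →
      ((↑S : Set V))ᶜ = ((↑S₀ : Set V))ᶜ ∪ ↑(S₀ \ S) := by
    intro S S₀ hsub
    ext x
    have hx : x ∈ S → x ∈ S₀ := fun h => hsub h
    simp only [Set.mem_compl_iff, Finset.coe_sdiff, Set.mem_union, Set.mem_diff,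
      Finset.mem_coe]
    tauto
  have hcompl2 : ∀ S S₀ : Finset V, S ⊆ S₀ →
      ((↑S₀ : Set V))ᶜ = ((↑S : Set V))ᶜ \ ↑(S₀ \ S) := by
    intro S S₀ hsub
    ext x
    have hx : x ∈ S → x ∈ S₀ := fun h => hsub h
    simp only [Set.mem_compl_iff, Finset.coe_sdiff, Set.mem_diff, Finset.mem_coe]
    tauto
  have hacyuniv : Acy Finset.univ := by
    intro v c hc
    exact absurd v.2 (by simp)
  constructor
  · -- Tplus
    have hne : {k | ∃ S : Finset V, Acy S ∧
        k = pathCoverNumber (G.induce ((↑S : Set V)ᶜ)) + S.card}.Nonempty :=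
      ⟨_, Finset.univ, hacyuniv, rfl⟩
    have hmem : Tplus G ∈ {k | ∃ S : Finset V, Acy S ∧
        k = pathCoverNumber (G.induce ((↑S : Set V)ᶜ)) + S.card} := Nat.sInf_mem hne
    obtain ⟨S₀, hS₀, hval₀⟩ := hmem
    obtain ⟨S, hsub, hAS, hmin⟩ := TOpt.exists_minimal S₀.card S₀ le_rfl hS₀
    refine ⟨S, hAS, ?_, hmn S hAS hmin⟩
    have h1 : Tplus G ≤ pathCoverNumber (G.induce ((↑S : Set V)ᶜ)) + S.card :=
      Nat.sInf_le ⟨S, hAS, rfl⟩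
    have h2 : TOpt.pc G ((↑S : Set V)ᶜ) ≤ TOpt.pc G ((↑S₀ : Set V)ᶜ) + (S₀ \ S).card := by
      rw [hcompl1 S S₀ hsub]
      exact TOpt.pc_union_finset_le G _ _
    have hcard : (S₀ \ S).card + S.card = S₀.card := Finset.card_sdiff_add_card_eq_card hsub
    rw [hpcn S, hpcn S₀] at *
    omega
  · -- Tminus
    have hTset : {d : ℤ | ∃ S : Finset V, Acy S ∧
        d = (pathCoverNumber (G.induce ((↑S : Set V)ᶜ)) : ℤ) - S.card} =
        (fun S : Finset V => (pathCoverNumber (G.induce ((↑S : Set V)ᶜ)) : ℤ) - S.card) ''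
          {S : Finset V | Acy S} := by
      ext d
      constructor
      · rintro ⟨S, h1, h2⟩; exact ⟨S, h1, h2.symm⟩
      · rintro ⟨S, h1, h2⟩; exact ⟨S, h1, h2.symm⟩
    have hfin : {d : ℤ | ∃ S : Finset V, Acy S ∧
        d = (pathCoverNumber (G.induce ((↑S : Set V)ᶜ)) : ℤ) - S.card}.Finite := by
      rw [hTset]
      exact Set.Finite.image _ (Set.toFinite _)
    have hne : {d : ℤ | ∃ S : Finset V, Acy S ∧
        d = (pathCoverNumber (G.induce ((↑S : Set V)ᶜ)) : ℤ) - S.card}.Nonempty :=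
      ⟨_, Finset.univ, hacyuniv, rfl⟩
    have hmem : Tminus G ∈ {d : ℤ | ∃ S : Finset V, Acy S ∧
        d = (pathCoverNumber (G.induce ((↑S : Set V)ᶜ)) : ℤ) - S.card} :=
      Set.Nonempty.csSup_mem hne hfin
    obtain ⟨S₀, hS₀, hval₀⟩ := hmem
    obtain ⟨S, hsub, hAS, hmin⟩ := TOpt.exists_minimal S₀.card S₀ le_rfl hS₀
    refine ⟨S, hAS, ?_, hmn S hAS hmin⟩
    have h1 : (pathCoverNumber (G.induce ((↑S : Set V)ᶜ)) : ℤ) - S.card ≤ Tminus G :=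
      le_csSup hfin.bddAbove ⟨S, hAS, rfl⟩
    have h2 : TOpt.pc G ((↑S₀ : Set V)ᶜ) ≤ TOpt.pc G ((↑S : Set V)ᶜ) + (S₀ \ S).card := by
      rw [hcompl2 S S₀ hsub]
      exact TOpt.pc_diff_finset_le G _ _
    have hcard : (S₀ \ S).card + S.card = S₀.card := Finset.card_sdiff_add_card_eq_card hsub
    rw [hpcn S, hpcn S₀] at *
    omega
end
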